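/- arXiv:1707.09546 — 8 statements merged into one kernel-verified Lean document; each statement's English description precedes it below -/
import Mathlib

section
/- Let A be an uncountable abelian group and ℵ a cardinal with ℵ₀ ≤ ℵ < |A|. Then A has a subgroup B such that the quotient group A/B has cardinality exactly ℵ. -/
/-- Let `A` be an uncountable abelian group and `ℵ` a cardinal with `ℵ₀ ≤ ℵ < |A|`.
Then `A` has a subgroup `B` such that `A ⧸ B` has cardinality exactly `ℵ`. -/
theorem stmt_4 {A : Type u} [AddCommGroup A] (hA : ¬ Countable A)
    (κ : Cardinal.{u}) (h1 : Cardinal.aleph0 ≤ κ) (h2 : κ < Cardinal.mk A) :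
    ∃ B : AddSubgroup A, Cardinal.mk (A ⧸ B) = κ := by
  classical
  obtain ⟨S, hS⟩ := Cardinal.le_mk_iff_exists_set.mp h2.le
  haveI : Infinite S := by rw [Cardinal.infinite_iff, hS]; exact h1
  -- free module on S mapping onto the span of S
  let π : (S →₀ ℤ) →ₗ[ℤ] A := Finsupp.linearCombination ℤ (fun s : S => (s : A))
  let j : (S →₀ ℤ) →+ (S →₀ ℚ) := Finsupp.mapRange.addMonoidHom (Int.castAddHom ℚ)
  have hj : Function.Injective j :=
    Finsupp.mapRange_injective _ (by simp) Int.cast_injective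
  let K : AddSubgroup (S →₀ ℤ) := π.toAddMonoidHom.ker
  let K' : AddSubgroup (S →₀ ℚ) := K.map j
  haveI : DivisibleBy (S →₀ ℚ) ℕ :=
    { div := fun x n => ((n : ℚ)⁻¹) • x
      div_zero := fun x => by simp
      div_cancel := fun {n} x hn => by
        rw [← Nat.cast_smul_eq_nsmul ℚ, smul_smul,
          mul_inv_cancel₀ (by exact_mod_cast hn), one_smul] }
  haveI : DivisibleBy ((S →₀ ℚ) ⧸ K') ℕ := QuotientAddGroup.divisibleBy K'
  haveI : DivisibleBy ((S →₀ ℚ) ⧸ K') ℤ := AddGroup.divisibleByIntOfDivisibleByNat _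
  have baer : Module.Baer ℤ ((S →₀ ℚ) ⧸ K') := Module.Baer.of_divisible _
  let g : (S →₀ ℤ) →+ ((S →₀ ℚ) ⧸ K') := (QuotientAddGroup.mk' K').comp j
  have hker : ∀ x : S →₀ ℤ, g x = 0 ↔ π x = 0 := by
    intro x
    show ((j x : S →₀ ℚ) : (S →₀ ℚ) ⧸ K') = 0 ↔ _
    rw [QuotientAddGroup.eq_zero_iff, AddSubgroup.mem_map_iff_mem hj]
    exact AddMonoidHom.mem_ker
  let πbar := QuotientAddGroup.kerLift π.toAddMonoidHom
  have hπbar : Function.Injective πbar := QuotientAddGroup.kerLift_injective _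
  let gbar : ((S →₀ ℤ) ⧸ K) →+ ((S →₀ ℚ) ⧸ K') :=
    QuotientAddGroup.lift K g (fun x hx => (hker x).mpr hx)
  obtain ⟨f, hf⟩ := baer.extension_property_addMonoidHom πbar hπbar gbar
  have key : ∀ s : S, f (s : A) = g (Finsupp.single s (1 : ℤ)) := by
    intro s
    have h1 : πbar ((Finsupp.single s (1 : ℤ) : S →₀ ℤ) : (S →₀ ℤ) ⧸ K)
        = (s : A) := by
      show π (Finsupp.single s (1 : ℤ)) = (s : A)
      simp [π]
    have h2 := DFunLike.congr_fun hf
      ((Finsupp.single s (1 : ℤ) : S →₀ ℤ) : (S →₀ ℤ) ⧸ K)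
    have h3 : f (s : A) = gbar ((Finsupp.single s (1 : ℤ) : S →₀ ℤ) : (S →₀ ℤ) ⧸ K) := by simpa [h1] using h2
    exact h3
  refine ⟨f.ker, le_antisymm ?_ ?_⟩
  · calc Cardinal.mk (A ⧸ f.ker)
        ≤ Cardinal.mk ((S →₀ ℚ) ⧸ K') :=
          Cardinal.mk_le_of_injective (QuotientAddGroup.kerLift_injective f)
      _ ≤ Cardinal.mk (S →₀ ℚ) :=
          Cardinal.mk_le_of_surjective (QuotientAddGroup.mk'_surjective K')
      _ = κ := by
          rw [Cardinal.mk_finsupp_lift_of_infinite, hS]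
          simp [Cardinal.mk_denumerable, max_eq_left h1]
  · rw [← hS]
    refine Cardinal.mk_le_of_injective (f := fun s : S => ((s : A) : A ⧸ f.ker)) ?_
    intro s t hst
    have hmem : -(s : A) + (t : A) ∈ f.ker := (QuotientAddGroup.eq).mp hst
    have hfs : f (s : A) = f (t : A) := by
      have := AddMonoidHom.mem_ker.mp hmem
      rw [map_add, map_neg, neg_add_eq_zero] at this
      exact this
    rw [key s, key t] at hfs
    have : g (Finsupp.single s (1 : ℤ) - Finsupp.single t (1 : ℤ)) = 0 := by
      rw [map_sub, hfs, sub_self]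
    have hπ : π (Finsupp.single s (1 : ℤ) - Finsupp.single t (1 : ℤ)) = 0 :=
      (hker _).mp this
    have : (s : A) = (t : A) := by
      rw [map_sub] at hπ
      have : π (Finsupp.single s (1 : ℤ)) = π (Finsupp.single t (1 : ℤ)) :=
        sub_eq_zero.mp hπ
      simpa [π] using this
    exact Subtype.ext this
end

section
/- If G is an infinite compact Hausdorff totally disconnected topological group, embedded as a closed subgroup of a product ∏_{i∈I} F_i of finite discrete groups with each projection p_i surjective onto F_i, then there exists a countable subset J ⊆ I such that the image of G under the projection to ∏_{j∈J} F_j is infinite. -/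
/-- If an infinite compact totally disconnected Hausdorff topological group `G` is embedded
as a closed subgroup of a product `∏ i, F i` of finite discrete groups with each coordinate
projection surjective, then there is a countable `J ⊆ I` such that the image of `G` under
the projection to `∏ j : J, F j` is infinite. -/
theorem stmt_6 {G : Type*} [Group G] [TopologicalSpace G] [IsTopologicalGroup G]
    [CompactSpace G] [T2Space G] [TotallyDisconnectedSpace G] [Infinite G]
    {I : Type*} (F : I → Type*) [∀ i, Group (F i)] [∀ i, Finite (F i)]
    [∀ i, TopologicalSpace (F i)] [∀ i, DiscreteTopology (F i)]
    (e : G →* (∀ i, F i)) (he : Topology.IsClosedEmbedding e)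
    (hsurj : ∀ i, Function.Surjective fun g => e g i) :
    ∃ J : Set I, J.Countable ∧
      (Set.range fun g : G => fun j : J => e g (j : I)).Infinite := by
  classical
  obtain ⟨f, hf⟩ := Infinite.natEmbedding G
  have hsep : ∀ p : {p : ℕ × ℕ // p.1 ≠ p.2}, ∃ i, e (f p.1.1) i ≠ e (f p.1.2) i := by
    rintro ⟨⟨m, n⟩, hmn⟩
    have : e (f m) ≠ e (f n) := fun h => hmn (hf (he.injective h))
    simpa [funext_iff] using this
  set idx : {p : ℕ × ℕ // p.1 ≠ p.2} → I := fun p => (hsep p).choose with hidx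
  refine ⟨Set.range idx, Set.countable_range idx, ?_⟩
  have : Function.Injective (fun n : ℕ => (fun j : Set.range idx => e (f n) (j : I))) := by
    intro m n h
    by_contra hmn
    have key := (hsep ⟨(m, n), hmn⟩).choose_spec
    exact key (congrFun h ⟨idx ⟨(m, n), hmn⟩, Set.mem_range_self _⟩)
  exact Set.infinite_of_injective_forall_mem (f := fun n : ℕ =>
    (fun j : Set.range idx => e (f n) (j : I))) this (fun n => ⟨f n, rfl⟩)
end

section
/- Separability is a three-space property for topological groups: if G is a topological group with a closed normal subgroup N such that both N and the quotient group G/N are separable, then G is separable. -/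
open Pointwise


/-- Separability is a three-space property for topological groups: if `N` is a closed
normal subgroup of a topological group `G` such that both `N` and `G ⧸ N` are separable,
then `G` is separable. -/
theorem stmt_7 {G : Type*} [Group G] [TopologicalSpace G] [IsTopologicalGroup G]
    (N : Subgroup G) [N.Normal] (hclosed : IsClosed (N : Set G))
    (hN : TopologicalSpace.SeparableSpace N)
    (hQ : TopologicalSpace.SeparableSpace (G ⧸ N)) :
    TopologicalSpace.SeparableSpace G := by
  obtain ⟨t, htc, htd⟩ := TopologicalSpace.exists_countable_dense N
  obtain ⟨t', ht'c, ht'd⟩ := TopologicalSpace.exists_countable_dense (G ⧸ N)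
  set D : Set G := Subtype.val '' t with hD
  set E : Set G := Quotient.out '' t' with hE
  have hDc : D.Countable := htc.image _
  have hEc : E.Countable := ht'c.image _
  -- closure of D contains N
  have hDN : (N : Set G) ⊆ closure D := by
    intro n hn
    have : closure t = Set.univ := htd.closure_eq
    have h1 : (⟨n, hn⟩ : N) ∈ closure t := by rw [this]; trivial
    have h2 : Subtype.val '' closure t ⊆ closure D :=
      image_closure_subset_closure_image continuous_subtype_val
    exact h2 ⟨_, h1, rfl⟩
  -- π '' E = t'
  have hπE : (QuotientGroup.mk '' E : Set (G ⧸ N)) = t' := by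
    ext q
    constructor
    · rintro ⟨g, ⟨q', hq', rfl⟩, rfl⟩
      simpa [QuotientGroup.out_eq'] using hq'
    · intro hq
      exact ⟨Quotient.out q, ⟨q, hq, rfl⟩, Quotient.out_eq' q⟩
  -- E * N = π⁻¹ (π '' E)
  have hEN : E * (N : Set G) = (QuotientGroup.mk : G → G ⧸ N) ⁻¹' (QuotientGroup.mk '' E) := by
    ext x
    constructor
    · rintro ⟨e, he, n, hn, rfl⟩
      refine ⟨e, he, ?_⟩
      symm
      rw [QuotientGroup.eq]
      simpa using hn
    · rintro ⟨e, he, hx⟩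
      have : e⁻¹ * x ∈ N := by rwa [← QuotientGroup.eq]
      exact ⟨e, he, e⁻¹ * x, this, by group⟩
  have hENdense : Dense (E * (N : Set G)) := by
    rw [hEN]
    intro x
    have : x ∈ (QuotientGroup.mk : G → G ⧸ N) ⁻¹' (closure (QuotientGroup.mk '' E)) := by
      rw [hπE, ht'd.closure_eq]; trivial
    exact IsOpenMap.preimage_closure_subset_closure_preimage QuotientGroup.isOpenMap_coe this
  -- E * N ⊆ closure (E * D)
  have hsub : E * (N : Set G) ⊆ closure (E * D) := by
    rintro x ⟨e, he, n, hn, rfl⟩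
    have h1 : e * n ∈ (e * ·) '' closure D := ⟨n, hDN hn, rfl⟩
    have h2 : (e * ·) '' closure D ⊆ closure ((e * ·) '' D) :=
      image_closure_subset_closure_image (continuous_const.mul continuous_id)
    refine closure_mono ?_ (h2 h1)
    rintro y ⟨d, hd, rfl⟩
    exact ⟨e, he, d, hd, rfl⟩
  refine ⟨⟨E * D, ?_, ?_⟩⟩
  · exact hEc.image2 hDc _
  · intro x
    exact closure_minimal hsub isClosed_closure (hENdense x)
end

section
/- Every continuous character χ : T^A → T on a power of the circle group depends on only finitely many coordinates: there exist pairwise distinct indices α₁, …, α_k ∈ A and integers n₁, …, n_k such that χ(x) = ∏_{i=1}^k x(α_i)^{n_i} for every x ∈ T^A. -/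
open Real MeasureTheory Complex

private noncomputable def toCircleHom (T : ℝ) : Multiplicative (AddCircle T) →* Circle where
  toFun x := AddCircle.toCircle (Multiplicative.toAdd x)
  map_one' := AddCircle.toCircle_zero
  map_mul' x y := AddCircle.toCircle_add _ _

lemma toCircle_zsmul (T : ℝ) (n : ℤ) (x : AddCircle T) :
    AddCircle.toCircle (n • x) = AddCircle.toCircle x ^ n := by
  simpa [toCircleHom] using map_zpow (toCircleHom T) (Multiplicative.ofAdd x) n

lemma circle_coe_zpow (z : Circle) (n : ℤ) : ((z ^ n : Circle) : ℂ) = (z : ℂ) ^ n := by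
  obtain ⟨m, rfl | rfl⟩ := n.eq_nat_or_neg <;>
    simp [zpow_natCast, zpow_neg]
  all_goals induction m with
  | zero => simp
  | succ k ih => rw [pow_succ, pow_succ, Circle.coe_mul, ih]

lemma half_plane_trivial (w : Circle) (h : ∀ m : ℕ, 0 < ((w ^ m : Circle) : ℂ).re) : w = 1 := by
  set θ := Complex.arg (w : ℂ) with hθ
  have hw : Circle.exp θ = w := Circle.exp_arg w
  have hcos : ∀ m : ℕ, 0 < Real.cos (m * θ) := by
    intro m
    have : ((w ^ m : Circle) : ℂ) = Complex.exp ((m * θ : ℝ) * Complex.I) := by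
      rw [← hw]
      induction m with
      | zero => simp
      | succ k ih =>
          rw [pow_succ, Circle.coe_mul, ih, Circle.coe_exp, ← Complex.exp_add]
          congr 1
          push_cast
          ring
    have h2 := h m
    rw [this, Complex.exp_ofReal_mul_I_re] at h2
    exact h2
  have habs : |θ| ≤ π := abs_le.mpr ⟨(Complex.neg_pi_lt_arg _).le, Complex.arg_le_pi _⟩
  have hhalf : |θ| < π / 2 := by
    by_contra hc
    push_neg at hc
    have h1 := hcos 1
    rw [Nat.cast_one, one_mul, ← Real.cos_abs] at h1
    have := Real.cos_nonpos_of_pi_div_two_le_of_le hc (by linarith [Real.pi_pos])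
    linarith
  have hθ0 : θ = 0 := by
    by_contra hne
    have ha : 0 < |θ| := abs_pos.mpr hne
    set a := |θ| with hadef
    have hcos' : ∀ m : ℕ, 0 < Real.cos (m * a) := by
      intro m
      have hca : Real.cos (m * a) = Real.cos (m * θ) := by
        rcases abs_choice θ with h | h
        · rw [hadef, h]
        · rw [hadef, h, mul_neg, Real.cos_neg]
      rw [hca]; exact hcos m
    obtain ⟨N, hN⟩ := exists_nat_ge (π / 2 / a)
    have hP : ∃ m : ℕ, π / 2 ≤ m * a := ⟨N, by rw [div_le_iff₀ ha] at hN; linarith⟩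
    classical
    have hm : π / 2 ≤ (Nat.find hP : ℝ) * a := Nat.find_spec hP
    have hm0 : Nat.find hP ≠ 0 := by
      intro h0
      rw [h0] at hm
      norm_num at hm
      linarith [Real.pi_pos, ha]
    have hprev : ¬ π / 2 ≤ ((Nat.find hP - 1 : ℕ) : ℝ) * a :=
      Nat.find_min hP (Nat.sub_lt (Nat.pos_of_ne_zero hm0) one_pos)
    push_neg at hprev
    have hma : ((Nat.find hP : ℕ) : ℝ) * a = ((Nat.find hP - 1 : ℕ) : ℝ) * a + a := by
      rw [Nat.cast_sub (Nat.one_le_iff_ne_zero.mpr hm0)]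
      push_cast
      ring
    have hub : ((Nat.find hP : ℕ) : ℝ) * a ≤ π + π / 2 := by
      rw [hma]; linarith
    have := Real.cos_nonpos_of_pi_div_two_le_of_le hm hub
    linarith [hcos' (Nat.find hP)]
  rw [← hw, hθ0, Circle.exp_zero]

open AddCircle in
lemma char_eq_zpow (φ : Circle →* Circle) (hφ : Continuous φ) :
    ∃ n : ℤ, ∀ z : Circle, φ z = z ^ n := by
  have hT : Fact (0 < 2 * π) := ⟨by positivity⟩
  set f : C(AddCircle (2 * π), ℂ) :=
    ⟨fun x => (φ (AddCircle.toCircle x) : ℂ),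
      continuous_subtype_val.comp (hφ.comp AddCircle.continuous_toCircle)⟩ with hf
  have hmul : ∀ x y : AddCircle (2 * π), f (x + y) = f x * f y := by
    intro x y
    simp only [hf, ContinuousMap.coe_mk, AddCircle.toCircle_add, map_mul, Circle.coe_mul]
  have habs : ∀ x, ‖f x‖ = 1 := by
    intro x
    simp [hf, Circle.norm_coe]
  set c : ℤ → ℂ := fourierCoeff (f : AddCircle (2 * π) → ℂ) with hc
  have key : ∀ (n : ℤ) (t : AddCircle (2 * π)), f t * c n = fourier n t * c n := by
    intro n t
    have h1 : fourierCoeff (fun x => f (x + t)) n = f t * c n := by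
      have e1 : (fun x : AddCircle (2 * π) => f (x + t)) = fun x => f t * f x := by
        funext x; rw [add_comm, hmul]
      rw [e1, fourierCoeff.const_mul]
    have hfar : ∀ x, (fourier (-n) (x - t) : ℂ) = fourier (-n) x * fourier n t := by
      intro x
      rw [fourier_apply, fourier_apply, fourier_apply, smul_sub, sub_eq_add_neg, ← neg_smul,
        neg_neg, AddCircle.toCircle_add]
      simp only [_root_.toCircle_zsmul]
      simp [Circle.coe_mul, circle_coe_zpow]
    have h2 : fourierCoeff (fun x => f (x + t)) n = fourier n t * c n := by
      have hinv := MeasureTheory.integral_add_right_eq_self (μ := haarAddCircle)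
        (fun x : AddCircle (2 * π) => fourier (-n) (x - t) • f x) t
      simp only [add_sub_cancel_right] at hinv
      calc fourierCoeff (fun x => f (x + t)) n
          = ∫ x : AddCircle (2 * π), fourier (-n) x • f (x + t) ∂haarAddCircle := rfl
        _ = ∫ x : AddCircle (2 * π), fourier (-n) (x - t) • f x ∂haarAddCircle := hinv
        _ = ∫ x : AddCircle (2 * π), fourier n t * (fourier (-n) x • f x) ∂haarAddCircle := by
            congr 1
            funext x
            rw [hfar x, smul_eq_mul, smul_eq_mul]
            ring
        _ = fourier n t * c n := by rw [MeasureTheory.integral_const_mul]; rfl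
    rw [← h1, h2]
  have hne : ∃ n, c n ≠ 0 := by
    by_contra hcon
    push_neg at hcon
    have hF := tsum_sq_fourierCoeff (ContinuousMap.toLp (E := ℂ) 2 haarAddCircle ℂ f)
    have h1 : ∀ i : ℤ, fourierCoeff ((ContinuousMap.toLp (E := ℂ) 2 haarAddCircle ℂ f :
        MeasureTheory.Lp ℂ 2 haarAddCircle) : AddCircle (2 * π) → ℂ) i = 0 :=
      fun i => (fourierCoeff_toLp f i).trans (hcon i)
    have h2 : ∫ t : AddCircle (2 * π),
        ‖(ContinuousMap.toLp (E := ℂ) 2 haarAddCircle ℂ f :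
          MeasureTheory.Lp ℂ 2 haarAddCircle) t‖ ^ 2 ∂haarAddCircle = 1 := by
      rw [MeasureTheory.integral_congr_ae
        (g := fun _ : AddCircle (2 * π) => (1 : ℝ)) ?_]
      · simp
      · filter_upwards [ContinuousMap.coeFn_toLp (p := 2) (μ := haarAddCircle) (𝕜 := ℂ) f] with t ht
        rw [ht, habs]
        norm_num
    rw [h2] at hF
    simp only [h1] at hF
    simp at hF
  obtain ⟨n, hn⟩ := hne
  refine ⟨n, fun z => ?_⟩
  obtain ⟨x, hx⟩ : ∃ x : AddCircle (2 * π), AddCircle.toCircle x = z := by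
    obtain ⟨x, hx⟩ := (homeomorphCircle Real.two_pi_pos.ne').surjective z
    exact ⟨x, by rw [← homeomorphCircle_apply Real.two_pi_pos.ne', hx]⟩
  have hfz : (f x : ℂ) = fourier n x := mul_right_cancel₀ hn (key n x)
  apply Circle.coe_injective
  rw [← hx, circle_coe_zpow]
  calc (φ (AddCircle.toCircle x) : ℂ) = f x := rfl
    _ = fourier n x := hfz
    _ = ((AddCircle.toCircle (n • x) : Circle) : ℂ) := by rw [fourier_apply]
    _ = ((AddCircle.toCircle x ^ n : Circle) : ℂ) := by rw [_root_.toCircle_zsmul]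
    _ = (AddCircle.toCircle x : ℂ) ^ n := circle_coe_zpow _ _

/-- Every continuous character `χ : 𝕋^A → 𝕋` on a power of the circle group depends on
only finitely many coordinates: there exist pairwise distinct indices `α₁, …, α_k ∈ A` and
integers `n₁, …, n_k` such that `χ x = ∏ i, x (α i) ^ n i` for all `x`. -/
theorem stmt_8 {A : Type*} [Nonempty A] (χ : (A → Circle) →* Circle)
    (hχ : Continuous χ) :
    ∃ (k : ℕ) (α : Fin k → A) (n : Fin k → ℤ), Function.Injective α ∧
      ∀ x : A → Circle, χ x = ∏ i, x (α i) ^ n i := by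
  classical
  have hVopen : IsOpen {z : Circle | 0 < (z : ℂ).re} :=
    isOpen_Ioi.preimage (Complex.continuous_re.comp continuous_subtype_val)
  have hU : IsOpen (χ ⁻¹' {z : Circle | 0 < (z : ℂ).re}) := hVopen.preimage hχ
  have h1 : (1 : A → Circle) ∈ χ ⁻¹' {z : Circle | 0 < (z : ℂ).re} := by
    simp [Set.mem_preimage, map_one]
  obtain ⟨I, u, hu, hsub⟩ := isOpen_pi_iff.mp hU 1 h1
  have hKey : ∀ z : A → Circle, (∀ a ∈ I, z a = 1) → χ z = 1 := by
    intro z hz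
    apply half_plane_trivial
    intro m
    rw [← map_pow]
    apply hsub
    intro a ha
    have hzm : (z ^ m) a = 1 := by rw [Pi.pow_apply, hz a ha, one_pow]
    rw [hzm]
    exact (hu a ha).2
  set k := I.card with hk
  set E := I.equivFin with hE
  set α : Fin k → A := fun i => ((E.symm i : I) : A) with hα
  have hαmem : ∀ i, α i ∈ I := fun i => (E.symm i).2
  have hαinj : Function.Injective α :=
    Subtype.coe_injective.comp E.symm.injective
  have hφ : ∀ i : Fin k, ∃ m : ℤ, ∀ c : Circle, χ (Pi.mulSingle (α i) c) = c ^ m := by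
    intro i
    have hcont : Continuous (χ.comp (MonoidHom.mulSingle (fun _ : A => Circle) (α i))) := by
      apply hχ.comp
      show Continuous fun c : Circle => (Pi.mulSingle (α i) c : A → Circle)
      apply continuous_pi
      intro a
      by_cases hA : a = α i
      · subst hA
        exact continuous_id.congr fun c => by simp
      · exact (continuous_const (y := (1 : Circle))).congr fun c => (Pi.mulSingle_eq_of_ne (M := fun _ : A => Circle) hA c).symm
    obtain ⟨m, hm⟩ := char_eq_zpow
      (χ.comp (MonoidHom.mulSingle (fun _ : A => Circle) (α i))) hcont
    exact ⟨m, fun c => hm c⟩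
  choose n hn using hφ
  refine ⟨k, α, n, hαinj, fun x => ?_⟩
  set y : A → Circle := fun a => if a ∈ I then x a else 1 with hy
  have hxy : χ x = χ y := by
    have h0 : χ (x * y⁻¹) = 1 := by
      apply hKey
      intro a ha
      simp [hy, ha]
    have : χ x = χ (x * y⁻¹) * χ y := by rw [← map_mul, inv_mul_cancel_right]
    rw [this, h0, one_mul]
  have hyprod : y = ∏ i : Fin k, Pi.mulSingle (α i) (x (α i)) := by
    funext a
    rw [Finset.prod_apply]
    by_cases ha : a ∈ I
    · obtain ⟨j, hj⟩ : ∃ j, α j = a := ⟨E ⟨a, ha⟩, by simp [hα]⟩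
      subst hj
      rw [Finset.prod_eq_single j]
      · simp [hy, hαmem j]
      · intro b _ hb
        exact Pi.mulSingle_eq_of_ne (fun h => hb (hαinj h).symm) _
      · intro h; exact absurd (Finset.mem_univ _) h
    · rw [Finset.prod_eq_one]
      · simp [hy, ha]
      · intro i _
        apply Pi.mulSingle_eq_of_ne
        intro h
        exact ha (h ▸ hαmem i)
  rw [hxy, hyprod, map_prod]
  exact Finset.prod_congr rfl fun i _ => hn i (x (α i))
end

section
/- Let H₁, …, H_n be abelian topological groups such that, for each i, every homomorphism from a countable subgroup of H_i to the circle group T extends to a continuous character of H_i. Then every homomorphism from a countable subgroup of the product H₁ × ⋯ × H_n to T extends to a continuous character of the product. -/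
noncomputable instance : DivisibleBy (Additive Circle) ℤ :=
  Function.Surjective.divisibleBy Circle.expHom
    (fun z => ⟨Complex.arg (z.toMul : ℂ), congrArg Additive.ofMul (Circle.exp_arg z.toMul)⟩)
    (fun a n => map_zsmul Circle.expHom n a)

universe u

lemma extendCircle {G : Type u} [CommGroup G] {S K : Subgroup G} (hSK : S ≤ K)
    (f : S →* Circle) :
    ∃ F : K →* Circle, ∀ (x : G) (hx : x ∈ S), F ⟨x, hSK hx⟩ = f ⟨x, hx⟩ := by
  have inj : Module.Injective ℤ (ULift.{u} (Additive Circle)) :=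
    Module.Baer.injective (Module.Baer.of_divisible _)
  let up : Additive Circle →+ ULift.{u} (Additive Circle) := AddEquiv.ulift.symm.toAddMonoidHom
  let i : Additive S →ₗ[ℤ] Additive K :=
    (MonoidHom.toAdditive (Subgroup.inclusion hSK)).toIntLinearMap
  have hi : Function.Injective i := Subgroup.inclusion_injective hSK
  let g : Additive S →ₗ[ℤ] ULift.{u} (Additive Circle) :=
    (up.comp (MonoidHom.toAdditive f)).toIntLinearMap
  obtain ⟨h, hh⟩ := inj.out i hi g
  refine ⟨MonoidHom.toAdditive.symm (AddEquiv.ulift.toAddMonoidHom.comp h.toAddMonoidHom), ?_⟩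
  intro x hx
  exact congrArg (fun a => Additive.toMul a.down) (hh (Additive.ofMul (⟨x, hx⟩ : S)))


/-- Let `H₁, …, H_n` be abelian topological groups such that for each `i`, every
homomorphism from a countable subgroup of `H i` to the circle group extends to a
continuous character of `H i` (i.e. countable subgroups are h-embedded). Then every
homomorphism from a countable subgroup of the product `∀ i, H i` to the circle extends
to a continuous character of the product. -/
theorem stmt_12 (n : ℕ) (H : Fin n → Type*) [∀ i, CommGroup (H i)]
    [∀ i, TopologicalSpace (H i)] [∀ i, IsTopologicalGroup (H i)]
    (hemb : ∀ i, ∀ S : Subgroup (H i), Countable S → ∀ f : S →* Circle,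
      ∃ g : H i →* Circle, Continuous g ∧ ∀ s : S, g s = f s) :
    ∀ S : Subgroup (∀ i, H i), Countable S → ∀ f : S →* Circle,
      ∃ g : (∀ i, H i) →* Circle, Continuous g ∧ ∀ s : S, g s = f s := by
  intro S hSc f
  -- the projections of S
  set Si : ∀ i, Subgroup (H i) := fun i => S.map (Pi.evalMonoidHom H i) with hSi
  have hSiC : ∀ i, Countable (Si i) := by
    intro i
    have : ((S : Set (∀ i, H i)).image (Pi.evalMonoidHom H i)).Countable :=
      (Set.countable_coe_iff.mp hSc).image _
    exact Set.countable_coe_iff.mpr this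
  -- the product subgroup K
  set K : Subgroup (∀ i, H i) := Subgroup.pi Set.univ Si with hK
  have hSK : S ≤ K := by
    intro x hx
    rw [hK, Subgroup.mem_pi]
    intro i _
    exact ⟨x, hx, rfl⟩
  -- extend f to K by divisibility of the circle
  obtain ⟨F, hF⟩ := extendCircle hSK f
  -- inclusions of factors into K
  have hmem : ∀ i (t : Si i), Pi.mulSingle i (t : H i) ∈ K := by
    intro i t
    rw [hK, Subgroup.mem_pi]
    intro j _
    by_cases hj : j = i
    · subst hj; rw [Pi.mulSingle_eq_same]; exact t.2
    · rw [Pi.mulSingle_eq_of_ne hj]; exact one_mem _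
  let ι : ∀ i, Si i →* K := fun i =>
    ((MonoidHom.mulSingle H i).comp (Si i).subtype).codRestrict K (hmem i)
  -- extend each coordinate character
  have hx : ∀ i, ∃ g : H i →* Circle, Continuous g ∧ ∀ t : Si i, g t = F (ι i t) :=
    fun i => hemb i (Si i) (hSiC i) (F.comp (ι i))
  choose g hgc hg using hx
  refine ⟨∏ i, (g i).comp (Pi.evalMonoidHom H i), ?_, ?_⟩
  · have : Continuous fun x : ∀ i, H i => ∏ i, g i (x i) :=
      continuous_finset_prod _ fun i _ => (hgc i).comp (continuous_apply i)
    convert this using 1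
    ext x
    simp
  · intro s
    have hmem' : ∀ i, (s : ∀ i, H i) i ∈ Si i := fun i => ⟨s, s.2, rfl⟩
    have step1 : (∏ i, (g i).comp (Pi.evalMonoidHom H i)) (s : ∀ i, H i)
        = ∏ i, F (ι i ⟨(s : ∀ i, H i) i, hmem' i⟩) := by
      rw [MonoidHom.finset_prod_apply]
      exact Finset.prod_congr rfl fun i _ => hg i ⟨(s : ∀ i, H i) i, hmem' i⟩
    rw [step1, ← map_prod F]
    have step2 : (∏ i, ι i ⟨(s : ∀ i, H i) i, hmem' i⟩) = ⟨(s : ∀ i, H i), hSK s.2⟩ := by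
      apply Subtype.ext
      push_cast
      have hcoe : ∀ i, ((ι i ⟨(s : ∀ i, H i) i, hmem' i⟩ : K) : ∀ j, H j)
          = Pi.mulSingle i ((s : ∀ i, H i) i) := fun i => rfl
      simp_rw [hcoe]
      exact Finset.univ_prod_mulSingle (s : ∀ i, H i)
    rw [step2]
    exact (hF s s.2).trans (by rw [Subtype.coe_eta])
end

section
/- Every non-discrete compactly generated locally compact Hausdorff topological group that is topologically simple is separable and metrizable. -/
set_option linter.unusedSectionVars false

open Filter Set Topology TopologicalSpace Pointwise Uniformity

section
variable {G : Type*} [Group G] [TopologicalSpace G] [IsTopologicalGroup G]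
    [T2Space G] [LocallyCompactSpace G]

lemma aux_conj_nhds {C U : Set G} (hC : IsCompact C) (hU : U ∈ 𝓝 (1 : G)) :
    ∃ V ∈ 𝓝 (1 : G), ∀ c ∈ C, ∀ v ∈ V, c * v * c⁻¹ ∈ U := by
  have hf : Continuous fun p : G × G => p.1 * p.2 * p.1⁻¹ := by continuity
  have key : ∀ c : G, ∃ W ∈ 𝓝 c, ∃ V ∈ 𝓝 (1 : G), ∀ w ∈ W, ∀ v ∈ V, w * v * w⁻¹ ∈ U := by
    intro c
    have : (fun p : G × G => p.1 * p.2 * p.1⁻¹) ⁻¹' U ∈ 𝓝 ((c, 1) : G × G) := by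
      apply hf.continuousAt.preimage_mem_nhds
      simpa using hU
    rcases mem_nhds_prod_iff.1 this with ⟨W, hW, V, hV, h⟩
    exact ⟨W, hW, V, hV, fun w hw v hv => h (Set.mk_mem_prod hw hv)⟩
  choose W hW V hV h using key
  rcases hC.elim_nhds_subcover W (fun c _ => hW c) with ⟨t, htC, ht⟩
  refine ⟨⋂ c ∈ t, V c, (biInter_mem t.finite_toSet).2 fun c _ => hV c, ?_⟩
  intro c hc v hv
  rcases Set.mem_iUnion₂.1 (ht hc) with ⟨c', hc', hcc'⟩
  exact h c' c hcc' v (Set.mem_iInter₂.1 hv c' hc')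

lemma aux_shrink {U : Set G} (hU : U ∈ 𝓝 (1 : G)) :
    ∃ B ∈ 𝓝 (1 : G), IsCompact B ∧ B⁻¹ = B ∧ B ⊆ U := by
  rcases local_compact_nhds hU with ⟨K, hK, hKU, hKc⟩
  refine ⟨K ∩ K⁻¹, Filter.inter_mem hK ?_, hKc.inter_right (hKc.inv.isClosed), ?_, fun x hx => hKU hx.1⟩
  · have : K⁻¹ ∈ 𝓝 ((1 : G)⁻¹) :=
      ContinuousAt.preimage_mem_nhds (continuousAt_inv) (by simpa using hK)
    simpa using this
  · ext x
    constructor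
    · rintro ⟨h1, h2⟩; exact ⟨by simpa using h2, by simpa using h1⟩
    · rintro ⟨h1, h2⟩; exact ⟨by simpa using h2, by simpa using h1⟩

/-- The key step: given a compact symmetric generating-ish set `T` and a nbhd `A` of 1,
find a smaller compact symmetric nbhd `B` with `B*B ⊆ A` and `T`-conjugates of `B` in `A`. -/
lemma aux_step {T : Set G} (hT : IsCompact T) {A : Set G} (hA : A ∈ 𝓝 (1 : G)) :
    ∃ B ∈ 𝓝 (1 : G), IsCompact B ∧ B⁻¹ = B ∧ (∀ v ∈ B, ∀ w ∈ B, v * w ∈ A) ∧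
      (∀ c ∈ T, ∀ v ∈ B, c * v * c⁻¹ ∈ A) := by
  rcases aux_conj_nhds hT hA with ⟨V₁, hV₁, hconj⟩
  rcases exists_nhds_one_split hA with ⟨V₂, hV₂, hsplit⟩
  rcases aux_shrink (Filter.inter_mem hV₁ hV₂) with ⟨B, hB, hBc, hBsym, hBsub⟩
  exact ⟨B, hB, hBc, hBsym,
    fun v hv w hw => hsplit v (hBsub hv).2 w (hBsub hw).2,
    fun c hc v hv => hconj c hc v (hBsub hv).1⟩

end

/-- Every non-discrete compactly generated locally compact Hausdorff topological group
that is topologically simple is separable and metrizable. -/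
theorem stmt_15 {G : Type*} [Group G] [TopologicalSpace G] [IsTopologicalGroup G]
    [T2Space G] [LocallyCompactSpace G]
    (hnd : ¬ DiscreteTopology G)
    (hcg : ∃ S : Set G, IsCompact S ∧ Subgroup.closure S = ⊤)
    (hsimple : ∀ N : Subgroup G, N.Normal → IsClosed (N : Set G) → N = ⊥ ∨ N = ⊤) :
    TopologicalSpace.SeparableSpace G ∧ TopologicalSpace.MetrizableSpace G := by
  obtain ⟨S, hScomp, hSgen⟩ := hcg
  -- the symmetric compact set T generates G as words
  set T : Set G := S ∪ S⁻¹ with hTdef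
  have hTcomp : IsCompact T := hScomp.union hScomp.inv
  have hTsym : ∀ x ∈ T, x⁻¹ ∈ T := by
    rintro x (hx | hx)
    · exact Or.inr (by simpa using hx)
    · exact Or.inl (by simpa using hx)
  have hgen : ∀ g : G, ∃ l : List G, (∀ x ∈ l, x ∈ T) ∧ l.prod = g := by
    intro g
    have hg : g ∈ Subgroup.closure S := by rw [hSgen]; trivial
    induction hg using Subgroup.closure_induction with
    | mem x hx => exact ⟨[x], by simpa [hTdef] using Or.inl hx, by simp⟩
    | one => exact ⟨[], by simp, by simp⟩
    | mul x y hx hy ihx ihy =>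
      obtain ⟨l₁, h₁, e₁⟩ := ihx
      obtain ⟨l₂, h₂, e₂⟩ := ihy
      exact ⟨l₁ ++ l₂, by
        intro z hz
        rcases List.mem_append.1 hz with h | h
        exacts [h₁ z h, h₂ z h], by simp [e₁, e₂]⟩
    | inv x hx ih =>
      obtain ⟨l, hl, e⟩ := ih
      refine ⟨(l.map Inv.inv).reverse, ?_, ?_⟩
      · intro z hz
        simp only [List.mem_reverse, List.mem_map] at hz
        obtain ⟨a, ha, rfl⟩ := hz
        exact hTsym a (hl a ha)
      · rw [List.prod_reverse_noncomm]
        simp [e]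
  -- G is nontrivial
  have hnontriv : ∃ g : G, g ≠ 1 := by
    by_contra h
    push_neg at h
    have : Subsingleton G := ⟨fun a b => by rw [h a, h b]⟩
    exact hnd (by infer_instance)
  obtain ⟨g₀, hg₀⟩ := hnontriv
  -- the base neighborhood avoiding g₀
  have hU₀ : ({g₀}ᶜ : Set G) ∈ 𝓝 (1 : G) :=
    (isOpen_compl_singleton).mem_nhds (by simpa using hg₀.symm)
  rcases aux_shrink hU₀ with ⟨A₀, hA₀, hA₀c, hA₀sym, hA₀sub⟩
  -- recursive construction
  have step : ∀ A : {A : Set G // A ∈ 𝓝 (1 : G)}, ∃ B : {A : Set G // A ∈ 𝓝 (1 : G)},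
      IsCompact B.1 ∧ B.1⁻¹ = B.1 ∧ (∀ v ∈ B.1, ∀ w ∈ B.1, v * w ∈ A.1) ∧
      (∀ c ∈ T, ∀ v ∈ B.1, c * v * c⁻¹ ∈ A.1) := by
    intro A
    rcases aux_step hTcomp A.2 with ⟨B, hB, h1, h2, h3, h4⟩
    exact ⟨⟨B, hB⟩, h1, h2, h3, h4⟩
  choose f hf1 hf2 hf3 hf4 using step
  set V : ℕ → {A : Set G // A ∈ 𝓝 (1 : G)} := fun n => f^[n] ⟨A₀, hA₀⟩ with hV
  have hVsucc : ∀ n, V (n + 1) = f (V n) := fun n => Function.iterate_succ_apply' f n _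
  have hVmem : ∀ n, (V n).1 ∈ 𝓝 (1 : G) := fun n => (V n).2
  have hVone : ∀ n, (1 : G) ∈ (V n).1 := fun n => mem_of_mem_nhds (hVmem n)
  have hVcompact : ∀ n, IsCompact (V n).1 := by
    intro n
    cases n with
    | zero => exact hA₀c
    | succ n => rw [hVsucc]; exact hf1 _
  have hVsym : ∀ n, ((V n).1)⁻¹ = (V n).1 := by
    intro n
    cases n with
    | zero => exact hA₀sym
    | succ n => rw [hVsucc]; exact hf2 _
  have hVmul : ∀ n, ∀ v ∈ (V (n+1)).1, ∀ w ∈ (V (n+1)).1, v * w ∈ (V n).1 := by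
    intro n
    rw [hVsucc]; exact hf3 _
  have hVconj : ∀ n, ∀ c ∈ T, ∀ v ∈ (V (n+1)).1, c * v * c⁻¹ ∈ (V n).1 := by
    intro n
    rw [hVsucc]; exact hf4 _
  have hVanti : ∀ n, (V (n+1)).1 ⊆ (V n).1 := by
    intro n v hv
    have := hVmul n v hv 1 (hVone _)
    simpa using this
  have hVanti' : Antitone fun n => (V n).1 := antitone_nat_of_succ_le hVanti
  -- K is a closed normal subgroup
  set Kc : Set G := ⋂ n, (V n).1 with hKc
  have hKmul : ∀ a ∈ Kc, ∀ b ∈ Kc, a * b ∈ Kc := by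
    intro a ha b hb
    refine Set.mem_iInter.2 fun n => ?_
    exact hVmul n a (Set.mem_iInter.1 ha (n+1)) b (Set.mem_iInter.1 hb (n+1))
  have hKinv : ∀ a ∈ Kc, a⁻¹ ∈ Kc := by
    intro a ha
    refine Set.mem_iInter.2 fun n => ?_
    have : a ∈ (V n).1 := Set.mem_iInter.1 ha n
    rw [← hVsym n]
    simpa using this
  -- conjugation of K elements by lists of T-elements
  have hconj_list : ∀ l : List G, (∀ x ∈ l, x ∈ T) → ∀ k ∈ Kc, ∀ n,
      l.prod * k * l.prod⁻¹ ∈ (V n).1 := by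
    intro l
    induction l with
    | nil => intro _ k hk n; simpa using Set.mem_iInter.1 hk n
    | cons t l ih =>
      intro hl k hk n
      have ht : t ∈ T := hl t (by simp)
      have hl' : ∀ x ∈ l, x ∈ T := fun x hx => hl x (by simp [hx])
      have hmem : l.prod * k * l.prod⁻¹ ∈ (V (n+1)).1 := ih hl' k hk (n+1)
      have := hVconj n t ht _ hmem
      have heq : t * (l.prod * k * l.prod⁻¹) * t⁻¹
          = (t :: l).prod * k * ((t :: l).prod)⁻¹ := by
        simp [mul_assoc]
      rwa [heq] at this
  let K : Subgroup G :=
    { carrier := Kc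
      one_mem' := Set.mem_iInter.2 hVone
      mul_mem' := fun ha hb => hKmul _ ha _ hb
      inv_mem' := fun ha => hKinv _ ha }
  have hKnormal : K.Normal := by
    constructor
    intro k hk g
    obtain ⟨l, hl, rfl⟩ := hgen g
    exact Set.mem_iInter.2 fun n => hconj_list l hl k hk n
  have hKclosed : IsClosed (K : Set G) :=
    isClosed_iInter fun n => (hVcompact n).isClosed
  have hKne : K ≠ ⊤ := by
    intro h
    have : g₀ ∈ Kc := by rw [hKc]; exact (h ▸ Subgroup.mem_top g₀ : g₀ ∈ K)
    have : g₀ ∈ A₀ := Set.mem_iInter.1 this 0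
    exact hA₀sub this rfl
  have hKbot : K = ⊥ := (hsimple K hKnormal hKclosed).resolve_right hKne
  have hKtriv : Kc = {1} := by
    ext x
    constructor
    · intro hx
      have : x ∈ K := hx
      rw [hKbot] at this
      simpa using this
    · rintro rfl
      exact Set.mem_iInter.2 hVone
  -- countable neighborhood basis at 1
  have hbasis : ∀ U ∈ 𝓝 (1 : G), ∃ n, (V n).1 ⊆ U := by
    intro U hU
    apply exists_subset_nhds_of_isCompact (V := fun n => (V n).1)
      (hVanti'.directed_ge) hVcompact
    intro x hx
    rw [← hKc, hKtriv] at hx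
    rw [Set.mem_singleton_iff.1 hx]
    exact hU
  have hcount : (𝓝 (1 : G)).IsCountablyGenerated := by
    have : (𝓝 (1 : G)).HasBasis (fun _ : ℕ => True) (fun n => (V n).1) := by
      refine Filter.hasBasis_iff.2 fun U => ⟨fun hU => ?_, ?_⟩
      · obtain ⟨n, hn⟩ := hbasis U hU
        exact ⟨n, trivial, hn⟩
      · rintro ⟨n, -, hn⟩
        exact Filter.mem_of_superset (hVmem n) hn
    exact this.isCountablyGenerated
  -- metrizability
  letI u : UniformSpace G := IsTopologicalGroup.rightUniformSpace G
  haveI : (uniformity G).IsCountablyGenerated := by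
    have he : uniformity G = Filter.comap (fun p : G × G => p.2 * p.1⁻¹) (𝓝 (1 : G)) := rfl
    rw [he]
    exact Filter.comap.isCountablyGenerated _ _
  haveI hmetr : TopologicalSpace.MetrizableSpace G := UniformSpace.metrizableSpace
  -- separability: G is a countable union of compact sets
  have hpow : ∀ n : ℕ, IsCompact (T ^ n) := by
    intro n
    induction n with
    | zero =>
      rw [pow_zero]
      have h1 : (1 : Set G) = {1} := rfl
      rw [h1]
      exact isCompact_singleton
    | succ n ih =>
      rw [pow_succ]
      exact ih.mul hTcomp
  have hlistpow : ∀ l : List G, (∀ x ∈ l, x ∈ T) → l.prod ∈ T ^ l.length := by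
    intro l
    induction l with
    | nil => intro _; simp [Set.mem_one]
    | cons t l ih =>
      intro hl
      have h1 : t ∈ T := hl t (by simp)
      have h2 : l.prod ∈ T ^ l.length := ih fun x hx => hl x (by simp [hx])
      have : t * l.prod ∈ T * T ^ l.length := Set.mul_mem_mul h1 h2
      simpa [pow_succ', List.length_cons] using this
  have hcover : (Set.univ : Set G) = ⋃ n : ℕ, T ^ n := by
    apply Set.eq_of_subset_of_subset
    · intro g _
      obtain ⟨l, hl, rfl⟩ := hgen g
      exact Set.mem_iUnion.2 ⟨l.length, hlistpow l hl⟩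
    · exact fun _ _ => Set.mem_univ _
  haveI : TopologicalSpace.PseudoMetrizableSpace G := hmetr.toPseudoMetrizableSpace
  letI := TopologicalSpace.pseudoMetrizableSpacePseudoMetric G
  have hsep : TopologicalSpace.SeparableSpace G := by
    rw [← TopologicalSpace.isSeparable_univ_iff, hcover]
    exact TopologicalSpace.IsSeparable.iUnion fun n => (hpow n).isSeparable
  exact ⟨hsep, hmetr⟩
end

section
/- There exists a countably infinite precompact Hausdorff abelian topological group H such that every quotient group of H by a closed subgroup is either trivial or non-metrizable. -/
open Filter Topology Set

namespace Stmt17Aux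

noncomputable section

open scoped Classical

abbrev Circ := AddCircle (1 : ℝ)

lemma circ_coe_ne_zero {θ : ℝ} (h1 : (1:ℝ)/4 ≤ θ) (h2 : θ ≤ 3/4) : (θ : Circ) ≠ 0 := by
  intro h
  rw [AddCircle.coe_eq_zero_iff] at h
  obtain ⟨n, hn⟩ := h
  have hn' : (n : ℝ) = θ := by simpa using hn
  rcases le_or_gt n 0 with h | h
  · have : (n : ℝ) ≤ 0 := by exact_mod_cast h
    linarith
  · have : (1:ℝ) ≤ (n:ℝ) := by exact_mod_cast h
    linarith

lemma g_kill (q : ℕ) (hq : 0 < q) : (q:ℤ) • ((((q:ℝ))⁻¹ : ℝ) : Circ) = 0 := by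
  rw [← AddCircle.coe_zsmul]
  have hq' : ((q:ℝ)) ≠ 0 := by positivity
  have h1 : ((q:ℤ) • (((q:ℝ))⁻¹) : ℝ) = 1 := by
    field_simp
    rw [zsmul_eq_mul]; push_cast; field_simp
  rw [h1]
  show ((1:ℝ) : Circ) = 0
  exact AddCircle.coe_period (p := (1:ℝ))

lemma mem_ker_iff (q : ℕ) (hq : 0 < q) {x : Circ} :
    (q:ℤ) • x = 0 ↔ ∃ k : ℤ, x = k • ((((q:ℝ))⁻¹ : ℝ) : Circ) := by
  constructor
  · intro hx
    obtain ⟨r, rfl⟩ : ∃ r : ℝ, (r : Circ) = x := Quotient.exists_rep x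
    rw [← AddCircle.coe_zsmul, AddCircle.coe_eq_zero_iff] at hx
    obtain ⟨n, hn⟩ := hx
    have hq' : ((q:ℝ)) ≠ 0 := by positivity
    have hn' : (n:ℝ) = (q:ℝ) * r := by
      push_cast [zsmul_eq_mul] at hn
      linarith
    have hr : r = (n:ℝ) * ((q:ℝ))⁻¹ := by
      field_simp
      linarith
    refine ⟨n, ?_⟩
    rw [← AddCircle.coe_zsmul, hr, zsmul_eq_mul]
  · rintro ⟨k, rfl⟩
    rw [smul_comm, g_kill q hq, smul_zero]

lemma ker_finite (q : ℕ) (hq : 0 < q) : {x : Circ | (q:ℤ) • x = 0}.Finite := by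
  set g : Circ := ((((q:ℝ))⁻¹ : ℝ) : Circ) with hg
  apply Set.Finite.subset ((Set.finite_Icc (0:ℤ) q).image (fun k => k • g))
  intro x hx
  obtain ⟨k, rfl⟩ := (mem_ker_iff q hq).mp hx
  refine ⟨k % q, ?_, ?_⟩
  · have hq0 : (q:ℤ) ≠ 0 := by positivity
    exact ⟨Int.emod_nonneg k hq0, le_of_lt (Int.emod_lt_of_pos k (by exact_mod_cast hq))⟩
  · show (k % (q:ℤ)) • g = k • g
    have hd : k - k % q = q * (k / q) := by
      rw [Int.emod_def]; ring
    have h0 : (k - k % (q:ℤ)) • g = 0 := by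
      rw [hd, mul_comm, mul_smul, g_kill q hq, smul_zero]
    have h2 := sub_smul k (k % (q:ℤ)) g
    rw [h0] at h2
    exact (sub_eq_zero.mp h2.symm).symm

lemma kill_mono {x : Circ} {n m : ℕ} (h : n ≤ m) (hx : ((2:ℤ)^n) • x = 0) :
    ((2:ℤ)^m) • x = 0 := by
  have hm : m = (m - n) + n := by omega
  rw [hm, pow_add, mul_smul, hx, smul_zero]

lemma zsmul_congr {z : Circ} {n : ℕ} (hz : ((2:ℤ)^n) • z = 0) {a b : ℤ}
    (h : ((2:ℤ)^n) ∣ a - b) : a • z = b • z := by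
  obtain ⟨d, hd⟩ := h
  have ha : a = b + 2^n * d := by linarith
  rw [ha, add_smul, mul_comm, mul_smul, hz, smul_zero, add_zero]

def Tor : AddSubgroup Circ where
  carrier := {x | ∃ n : ℕ, ((2:ℤ)^n) • x = 0}
  zero_mem' := ⟨0, smul_zero _⟩
  add_mem' := by
    rintro a b ⟨n, hn⟩ ⟨m, hm⟩
    exact ⟨max n m, by
      rw [smul_add, kill_mono (le_max_left n m) hn, kill_mono (le_max_right n m) hm, add_zero]⟩
  neg_mem' := by
    rintro a ⟨n, hn⟩
    exact ⟨n, by rw [smul_neg, hn, neg_zero]⟩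

def A : Type := ↥Tor

instance : AddCommGroup A := inferInstanceAs (AddCommGroup ↥Tor)

lemma A_ext {x y : A} (h : x.1 = y.1) : x = y := Subtype.ext h

lemma A_spec (x : A) : ∃ n : ℕ, ((2:ℤ)^n) • x.1 = 0 := x.2

def E (x : A) : ℕ := Nat.find (A_spec x)

lemma E_spec (x : A) : ((2:ℤ)^(E x)) • x.1 = 0 := Nat.find_spec (A_spec x)

lemma E_min (x : A) {j : ℕ} (h : j < E x) : ((2:ℤ)^j) • x.1 ≠ 0 := Nat.find_min (A_spec x) h

lemma E_le {x : A} {m : ℕ} (h : ((2:ℤ)^m) • x.1 = 0) : E x ≤ m := Nat.find_min' (A_spec x) h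

lemma E_kill {x : A} {m : ℕ} (h : E x ≤ m) : ((2:ℤ)^m) • x.1 = 0 :=
  kill_mono h (E_spec x)

-- the 2-adic integers
local notation "Z2" => PadicInt 2

lemma padic_int_dvd {k : ℤ} {n : ℕ} (h : ((2:Z2)^n) ∣ (k : Z2)) : ((2:ℤ)^n) ∣ k := by
  have h1 : (k:Z2) ∈ Ideal.span {((2:ℕ):Z2)^n} := by
    rw [Ideal.mem_span_singleton]
    exact_mod_cast h
  have h2 := (PadicInt.norm_le_pow_iff_mem_span_pow (k:Z2) n).mpr h1
  have h3 := (PadicInt.norm_int_le_pow_iff_dvd (p := 2) (k := k) (n := n)).mp h2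
  exact_mod_cast h3

lemma appr_sub_dvd (c : Z2) {k m : ℕ} (hkm : k ≤ m) :
    ((2:ℤ)^k) ∣ ((c.appr m : ℤ) - (c.appr k : ℤ)) := by
  have h := PadicInt.dvd_appr_sub_appr c k m hkm
  have hmono := PadicInt.appr_mono c hkm
  have : ((c.appr m : ℤ) - (c.appr k : ℤ)) = ((c.appr m - c.appr k : ℕ) : ℤ) := by
    omega
  rw [this]
  exact_mod_cast h

def iota : A →+ (Z2 → Circ) where
  toFun x := fun c => ((c.appr (E x) : ℤ)) • x.1
  map_zero' := by
    funext c
    show ((c.appr (E 0) : ℤ)) • (0 : ↥Tor).1 = 0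
    rw [ZeroMemClass.coe_zero, smul_zero]
  map_add' := by
    intro x y
    funext c
    show ((c.appr (E (x+y)) : ℤ)) • (x+y).1
      = ((c.appr (E x) : ℤ)) • x.1 + ((c.appr (E y) : ℤ)) • y.1
    set m := max (E (x+y)) (max (E x) (E y)) with hm
    have key : ∀ z : A, E z ≤ m → ((c.appr (E z) : ℤ)) • z.1 = ((c.appr m : ℤ)) • z.1 :=
      fun z hz => (zsmul_congr (E_kill (le_refl (E z))) (appr_sub_dvd c hz)).symm
    rw [key _ (le_max_left _ _), key x (le_trans (le_max_left _ _) (le_max_right _ _)),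
      key y (le_trans (le_max_right _ _) (le_max_right _ _))]
    have hco : (x+y).1 = x.1 + y.1 := rfl
    rw [hco, smul_add]

lemma iota_apply (x : A) (c : Z2) {b : ℤ} (h : ((2:Z2)^(E x)) ∣ c - b) :
    iota x c = b • x.1 := by
  show ((c.appr (E x) : ℤ)) • x.1 = b • x.1
  apply zsmul_congr (E_spec x)
  apply padic_int_dvd
  push_cast
  have h1 : ((2:Z2)^(E x)) ∣ c - (c.appr (E x) : Z2) := by
    have := PadicInt.appr_spec (E x) c
    rw [Ideal.mem_span_singleton] at this
    exact_mod_cast this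
  have h2 : ((2:Z2)^(E x)) ∣ ((c.appr (E x) : Z2) - b) := by
    have := dvd_sub h1 h
    have heq : (c - (c.appr (E x) : Z2)) - (c - b) = -((c.appr (E x) : Z2) - b) := by ring
    rw [heq] at this
    exact (dvd_neg.mp this)
  exact_mod_cast h2

lemma iota_one (x : A) : iota x 1 = x.1 := by
  have := iota_apply x 1 (b := 1) (by norm_num)
  rwa [one_smul] at this

lemma iota_inj : Function.Injective iota := by
  intro x y h
  apply A_ext
  rw [← iota_one x, ← iota_one y, h]

instance : TopologicalSpace A := TopologicalSpace.induced iota inferInstance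

lemma iota_inducing : Topology.IsInducing iota := ⟨rfl⟩

lemma iota_embedding : Topology.IsEmbedding iota := ⟨iota_inducing, iota_inj⟩

instance : IsTopologicalAddGroup A := iota_inducing.topologicalAddGroup iota

instance : T2Space A := iota_embedding.t2Space

lemma iota_continuous : Continuous iota := continuous_induced_dom

lemma ker_finite' (n : ℕ) : {z : Circ | ((2:ℤ)^n) • z = 0}.Finite := by
  have h := ker_finite (2^n) (by positivity)
  have : {z : Circ | (((2^n : ℕ)):ℤ) • z = 0} = {z : Circ | ((2:ℤ)^n) • z = 0} := by
    ext z; push_cast; rfl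
  rwa [this] at h

instance : Countable A := by
  have h : ((Tor : Set Circ)).Countable := by
    have : (Tor : Set Circ) = ⋃ n : ℕ, {z : Circ | ((2:ℤ)^n) • z = 0} := by
      ext z
      simp only [Set.mem_iUnion, SetLike.mem_coe]
      exact Iff.rfl
    rw [this]
    exact Set.countable_iUnion (fun n => (ker_finite' n).countable)
  exact h.to_subtype

def f₀ (n : ℕ) : A := ⟨((((2:ℝ)^n)⁻¹ : ℝ) : Circ), ⟨n, by
  rw [← AddCircle.coe_zsmul]
  have h1 : ((2:ℤ)^n • (((2:ℝ)^n)⁻¹) : ℝ) = 1 := by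
    push_cast [zsmul_eq_mul]
    field_simp
  rw [h1]
  show ((1:ℝ) : Circ) = 0
  exact AddCircle.coe_period (p := (1:ℝ))⟩⟩

lemma f₀_inj_aux {n m : ℕ} (h : n < m) : f₀ n ≠ f₀ m := by
  intro heq
  have h1 : (((((2:ℝ)^n)⁻¹ : ℝ)) : Circ) = ((((2:ℝ)^m)⁻¹ : ℝ) : Circ) := congrArg Subtype.val heq
  have h2 : (((((2:ℝ)^n)⁻¹ - ((2:ℝ)^m)⁻¹ : ℝ)) : Circ) = 0 := by
    have := map_sub (QuotientAddGroup.mk' (AddSubgroup.zmultiples (1:ℝ)))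
      (((2:ℝ)^n)⁻¹) (((2:ℝ)^m)⁻¹)
    have h3 : ((((2:ℝ)^n)⁻¹ : ℝ) : Circ) - ((((2:ℝ)^m)⁻¹ : ℝ) : Circ) = 0 := by
      rw [h1, sub_self]
    exact this.trans h3
  rw [AddCircle.coe_eq_zero_iff] at h2
  obtain ⟨k, hk⟩ := h2
  have hk' : (k:ℝ) = ((2:ℝ)^n)⁻¹ - ((2:ℝ)^m)⁻¹ := by
    have := hk
    rw [zsmul_eq_mul, mul_one] at this
    exact this
  have hlt : ((2:ℝ)^m)⁻¹ < ((2:ℝ)^n)⁻¹ := by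
    exact inv_strictAnti₀ (by positivity) (pow_lt_pow_right₀ (by norm_num) h)
  have hub : ((2:ℝ)^n)⁻¹ ≤ 1 := by
    rw [inv_le_one_iff₀]
    right
    exact one_le_pow₀ (by norm_num)
  have hpos : (0:ℝ) < ((2:ℝ)^m)⁻¹ := by positivity
  rcases le_or_gt k 0 with hk0 | hk0
  · have : (k:ℝ) ≤ 0 := by exact_mod_cast hk0
    linarith
  · have : (1:ℝ) ≤ (k:ℝ) := by exact_mod_cast hk0
    linarith

instance : Infinite A := by
  apply Infinite.of_injective f₀
  intro n m h
  by_contra hne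
  rcases Nat.lt_or_ge n m with hlt | hge
  · exact f₀_inj_aux hlt h
  · exact f₀_inj_aux (by omega) h.symm

lemma not_isOpen_zero : ¬ IsOpen ({0} : Set A) := by
  intro hop
  rw [iota_inducing.isOpen_iff] at hop
  obtain ⟨U, hU, hU0⟩ := hop
  have h0U : iota 0 ∈ U := by
    have : (0:A) ∈ iota ⁻¹' U := by rw [hU0]; exact rfl
    exact this
  rw [map_zero] at h0U
  set K := closure (Set.range iota) with hK
  have hKc : IsCompact K := isClosed_closure.isCompact
  have hcov : K ⊆ ⋃ a : A, (fun y => y - iota a) ⁻¹' U := by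
    intro y hy
    have hopen : IsOpen ((fun z => y - z) ⁻¹' U) :=
      ((continuous_const.sub continuous_id).isOpen_preimage _ hU)
    have hymem : y ∈ (fun z => y - z) ⁻¹' U := by
      show y - y ∈ U
      rw [sub_self]; exact h0U
    obtain ⟨z, hz1, hz2⟩ := mem_closure_iff.mp hy _ hopen hymem
    obtain ⟨a, rfl⟩ := hz2
    exact Set.mem_iUnion.mpr ⟨a, hz1⟩
  obtain ⟨t, ht⟩ := hKc.elim_finite_subcover _
    (fun a : A => ((continuous_id.sub continuous_const).isOpen_preimage _ hU)) hcov
  have huniv : (Set.univ : Set A) ⊆ ↑t := by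
    intro b _
    have hbK : iota b ∈ K := subset_closure (Set.mem_range_self b)
    obtain ⟨a, hat, hb⟩ := Set.mem_iUnion₂.mp (ht hbK)
    have : b - a ∈ iota ⁻¹' U := by
      show iota (b - a) ∈ U
      rw [map_sub]
      exact hb
    rw [hU0] at this
    have : b = a := by
      have := Set.mem_singleton_iff.mp this
      exact sub_eq_zero.mp this
    rwa [this]
  have hfin : (Set.univ : Set A).Finite := t.finite_toSet.subset huniv
  have : Finite A := Set.finite_univ_iff.mp hfin
  exact not_finite A

lemma exists_zsmul {x y : Circ} {n m : ℕ} (hnm : n ≤ m)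
    (hx : ((2:ℤ)^n) • x = 0) (hy : ((2:ℤ)^m) • y = 0)
    (hy' : ∀ j < m, ((2:ℤ)^j) • y ≠ 0) : ∃ k : ℤ, x = k • y := by
  rcases Nat.eq_zero_or_pos m with hm | hm
  · subst hm
    have hn : n = 0 := by omega
    subst hn
    refine ⟨0, ?_⟩
    rw [zero_smul]
    rw [pow_zero, one_smul] at hx
    exact hx
  · set q : ℕ := 2^m with hq
    set g : Circ := ((((q:ℝ))⁻¹ : ℝ) : Circ) with hg
    have hqpos : 0 < q := by positivity
    have hcast : ((q:ℕ):ℤ) = (2:ℤ)^m := by rw [hq]; push_cast; ring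
    have hgkill : ((2:ℤ)^m) • g = 0 := by rw [← hcast]; exact g_kill q hqpos
    obtain ⟨a, ha⟩ := (mem_ker_iff q hqpos).mp (by rw [hcast]; exact hy)
    have hodd : ¬ (2:ℤ) ∣ a := by
      rintro ⟨d, rfl⟩
      apply hy' (m-1) (by omega)
      rw [ha]
      have : ((2:ℤ)^(m-1)) • (2*d) • g = ((2:ℤ)^(m-1) * (2*d)) • g := (mul_smul _ _ _).symm
      rw [this]
      have h2 : (2:ℤ)^(m-1) * (2*d) = d * 2^m := by
        have hm1 : (2:ℤ)^m = 2^(m-1) * 2 := by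
          rw [← pow_succ]
          congr 1
          omega
        rw [hm1]
        ring
      rw [h2, mul_smul, hgkill, smul_zero]
    have hco : IsCoprime ((2:ℤ)^m) a :=
      (Int.prime_two.coprime_iff_not_dvd.mpr hodd).pow_left
    obtain ⟨u, v, huv⟩ := hco
    obtain ⟨b, hb⟩ := (mem_ker_iff q hqpos).mp
      (by rw [hcast]; exact kill_mono hnm hx)
    refine ⟨b * v, ?_⟩
    have hgy : g = v • y := by
      have h1 : g = (u * 2^m + v * a) • g := by rw [huv, one_smul]
      rw [h1, add_smul, mul_smul, hgkill, smul_zero, zero_add,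
        mul_smul, ← ha]
    rw [hb]
    show b • g = (b * v) • y
    rw [hgy, smul_smul]

lemma step_far (b : ℤ) (n : ℕ) (y : A) (hn : n < E y) :
    ∃ t θ, θ ∈ Set.Icc ((1:ℝ)/4) (3/4) ∧ ((b + t * 2^n : ℤ)) • y.1 = (θ : Circ) := by
  set m := E y with hm
  set q : ℕ := m - n with hq
  have hqpos : 0 < q := by omega
  set z : Circ := ((2:ℤ)^n) • y.1 with hz
  have hzkill : ((2:ℤ)^q) • z = 0 := by
    rw [hz, smul_smul, ← pow_add]
    have : q + n = m := by omega
    rw [this]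
    exact E_spec y
  have hzmin : ∀ j < q, ((2:ℤ)^j) • z ≠ 0 := by
    intro j hj h0
    apply E_min y (j := j + n) (by omega)
    rw [pow_add, mul_smul]
    exact h0
  set Q : ℕ := 2^q with hQ
  have hQpos : 0 < Q := by positivity
  have hQcast : ((Q:ℕ):ℤ) = (2:ℤ)^q := by rw [hQ]; push_cast; ring
  set g : Circ := ((((Q:ℝ))⁻¹ : ℝ) : Circ) with hg
  have hgkill : ((2:ℤ)^q) • g = 0 := by rw [← hQcast]; exact g_kill Q hQpos
  obtain ⟨u, hu⟩ := exists_zsmul (le_refl q) hgkill hzkill hzmin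
  obtain ⟨r, hr⟩ : ∃ r : ℝ, (r : Circ) = b • y.1 := Quotient.exists_rep _
  set ε : ℝ := ((Q:ℝ))⁻¹ with hε
  have hεpos : 0 < ε := by positivity
  have hε2 : ε ≤ 1/2 := by
    rw [hε]
    have h2 : (2:ℝ) ≤ (Q:ℝ) := by
      have : 2 ≤ Q := by
        calc 2 = 2^1 := (pow_one 2).symm
        _ ≤ 2^q := Nat.pow_le_pow_right (by norm_num) (by omega)
      exact_mod_cast this
    rw [show (1:ℝ)/2 = (2:ℝ)⁻¹ by norm_num]
    exact inv_anti₀ (by norm_num) h2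
  set s : ℤ := ⌈(1/4 - r)/ε⌉ with hs
  have h1 : 1/4 ≤ r + s*ε := by
    have := Int.le_ceil ((1/4 - r)/ε)
    have h2 : (1/4 - r) ≤ s * ε := by
      rw [div_le_iff₀ hεpos] at this
      linarith
    linarith
  have h2 : r + s*ε ≤ 3/4 := by
    have := Int.ceil_lt_add_one ((1/4 - r)/ε)
    have h3 : (s:ℝ) * ε < (1/4 - r) + ε := by
      have h4 : ((1/4 - r)/ε + 1) * ε = (1/4 - r) + ε := by
        field_simp
      calc (s:ℝ) * ε < ((1/4 - r)/ε + 1) * ε := by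
            apply mul_lt_mul_of_pos_right this hεpos
        _ = (1/4 - r) + ε := h4
    linarith
  refine ⟨s * u, r + s*ε, ⟨h1, h2⟩, ?_⟩
  rw [add_smul, hr.symm]
  have hterm : ((s * u * 2^n : ℤ)) • y.1 = s • g := by
    rw [mul_smul, mul_smul, ← hz, ← hu]
  rw [hterm]
  have hcoe : (s:ℤ) • g = ((s * ε : ℝ) : Circ) := by
    rw [hg, ← AddCircle.coe_zsmul]
    congr 1
    rw [zsmul_eq_mul, hε]
  rw [hcoe, ← AddCircle.coe_add]

lemma no_seq (x : ℕ → A) (hx : ∀ k, x k ≠ 0) (hlim : Tendsto x atTop (𝓝 0)) : False := by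
  have hcoord : ∀ c : Z2, Tendsto (fun k => iota (x k) c) atTop (𝓝 0) := by
    intro c
    have hcont : Continuous (fun a : A => iota a c) :=
      (continuous_apply c).comp iota_continuous
    have h := (hcont.tendsto 0).comp hlim
    have h0 : iota (0:A) c = 0 := by rw [map_zero]; rfl
    rwa [Function.comp_def, h0] at h
  -- orders of the sequence are unbounded
  have step : ∀ m K : ℕ, ∃ k, K ≤ k ∧ m < E (x k) := by
    by_contra hcon
    push_neg at hcon
    obtain ⟨m, K, hmK⟩ := hcon
    set Sf : Set A := {a : A | ((2:ℤ)^m) • a.1 = 0} \ {0} with hSf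
    have hSfin : Sf.Finite := by
      apply Set.Finite.subset (Set.Finite.preimage
        (Function.Injective.injOn (fun a b h => A_ext h)) (ker_finite' m))
      intro a ha
      exact ha.1
    have h0 : (0:A) ∉ Sf := fun h => h.2 rfl
    have hopenc : Sfᶜ ∈ 𝓝 (0:A) := hSfin.isClosed.isOpen_compl.mem_nhds h0
    have hev := hlim hopenc
    rw [mem_map, mem_atTop_sets] at hev
    obtain ⟨N, hN⟩ := hev
    have hk := hN (max K N) (le_max_right _ _)
    apply hk
    refine ⟨kill_mono (hmK _ (le_max_left _ _)) (E_spec _), ?_⟩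
    exact hx (max K N)
  -- extract subsequence with strictly increasing orders
  let k : ℕ → ℕ := fun j => Nat.rec (step 0 0).choose
    (fun _ prev => (step (E (x prev)) (prev + 1)).choose) j
  have hk0 : 0 < E (x (k 0)) := (step 0 0).choose_spec.2
  have hkstep : ∀ j, (k j + 1 ≤ k (j+1)) ∧ E (x (k j)) < E (x (k (j+1))) := by
    intro j
    exact ⟨(step (E (x (k j))) (k j + 1)).choose_spec.1,
      (step (E (x (k j))) (k j + 1)).choose_spec.2⟩
  set e : ℕ → ℕ := fun j => E (x (k j)) with he_def
  have he : StrictMono e := strictMono_nat_of_lt_succ (fun j => (hkstep j).2)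
  have hkmono : StrictMono k := strictMono_nat_of_lt_succ
    (fun j => lt_of_lt_of_le (Nat.lt_succ_self _) (hkstep j).1)
  have he0 : 1 ≤ e 0 := hk0
  have heGE : ∀ j, j + 1 ≤ e j := by
    intro j
    induction j with
    | zero => exact he0
    | succ j ih =>
      have h1 := he (Nat.lt_succ_self j)
      simp only [Nat.succ_eq_add_one] at h1
      omega
  -- recursive digit construction
  have hrec : ∀ (j : ℕ) (b : ℤ), ∃ b' : ℤ, ((2:ℤ)^(e j)) ∣ b' - b ∧
      ∃ θ ∈ Set.Icc ((1:ℝ)/4) (3/4), b' • (x (k (j+1))).1 = (θ : Circ) := by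
    intro j b
    obtain ⟨t, θ, hθ, hb⟩ := step_far b (e j) (x (k (j+1))) (he (Nat.lt_succ_self j))
    exact ⟨b + t * 2^(e j), ⟨t, by ring⟩, θ, hθ, hb⟩
  have h0' : ∃ b : ℤ, ∃ θ ∈ Set.Icc ((1:ℝ)/4) (3/4), b • (x (k 0)).1 = (θ : Circ) := by
    obtain ⟨t, θ, hθ, hb⟩ := step_far 0 0 (x (k 0)) hk0
    exact ⟨0 + t * 2^0, θ, hθ, hb⟩
  let B : ℕ → ℤ := fun j => Nat.rec h0'.choose (fun j prev => (hrec j prev).choose) j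
  have hB0 : ∃ θ ∈ Set.Icc ((1:ℝ)/4) (3/4), (B 0) • (x (k 0)).1 = (θ : Circ) :=
    h0'.choose_spec
  have hBsucc : ∀ j, ((2:ℤ)^(e j)) ∣ B (j+1) - B j ∧
      ∃ θ ∈ Set.Icc ((1:ℝ)/4) (3/4), (B (j+1)) • (x (k (j+1))).1 = (θ : Circ) :=
    fun j => (hrec j (B j)).choose_spec
  have hfar : ∀ j, ∃ θ ∈ Set.Icc ((1:ℝ)/4) (3/4), (B j) • (x (k j)).1 = (θ : Circ) := by
    intro j
    cases j with
    | zero => exact hB0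
    | succ j => exact (hBsucc j).2
  have hchain : ∀ i j, j ≤ i → ((2:ℤ)^(e j)) ∣ B i - B j := by
    intro i
    induction i with
    | zero =>
      intro j hj
      have : j = 0 := by omega
      subst this
      simp
    | succ i ih =>
      intro j hj
      rcases Nat.eq_or_lt_of_le hj with h | h
      · subst h; simp
      · have h1 : j ≤ i := by omega
        have h2 := ih j h1
        have h3 : ((2:ℤ)^(e j)) ∣ B (i+1) - B i :=
          dvd_trans (pow_dvd_pow 2 (he.monotone h1)) (hBsucc i).1
        have : B (i+1) - B j = (B (i+1) - B i) + (B i - B j) := by ring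
        rw [this]
        exact dvd_add h3 h2
  -- Cauchy sequence in Z2
  set cs : ℕ → Z2 := fun j => (Int.cast (B j) : Z2) with hcs
  have hdistB : ∀ i j : ℕ, j ≤ i → ‖cs i - cs j‖ ≤ ((2:ℝ))^(-(e j : ℤ)) := by
    intro i j hji
    have hd := hchain i j hji
    have : cs i - cs j = ((B i - B j : ℤ) : Z2) := by push_cast; ring
    rw [this]
    have := (PadicInt.norm_int_le_pow_iff_dvd (p := 2) (k := B i - B j) (n := e j)).mpr hd
    calc ‖((B i - B j : ℤ) : Z2)‖ ≤ (((2:ℕ)):ℝ)^(-(e j : ℤ)) := this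
      _ = ((2:ℝ))^(-(e j : ℤ)) := by norm_num
  have hdist : ∀ N i j : ℕ, N ≤ i → N ≤ j → dist (cs i) (cs j) ≤ ((2:ℝ))^(-(N:ℤ)) := by
    intro N i j hNi hNj
    have hb : ∀ a b : ℕ, N ≤ b → b ≤ a → dist (cs a) (cs b) ≤ ((2:ℝ))^(-(N:ℤ)) := by
      intro a b hNb hba
      rw [dist_eq_norm]
      calc ‖cs a - cs b‖ ≤ ((2:ℝ))^(-(e b : ℤ)) := hdistB a b hba
        _ ≤ ((2:ℝ))^(-(N:ℤ)) := by
          apply zpow_le_zpow_right₀ (by norm_num)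
          have : N ≤ e b := le_trans hNb (by have := heGE b; omega)
          omega
    rcases le_total j i with h | h
    · exact hb i j hNj h
    · rw [dist_comm]; exact hb j i hNi h
  have hcauchy : CauchySeq cs := by
    refine cauchySeq_of_le_tendsto_0 (s := cs) (fun N => ((2:ℝ))^(-(N:ℤ)))
      (fun n m N hn hm => hdist N n m hn hm) ?_
    have hconv : ∀ N : ℕ, ((2:ℝ))^(-(N:ℤ)) = (1/2)^N := by
      intro N
      rw [zpow_neg, zpow_natCast, one_div, inv_pow]
    simp only [hconv]
    exact tendsto_pow_atTop_nhds_zero_of_lt_one (by norm_num) (by norm_num)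
  obtain ⟨c, hc⟩ := cauchySeq_tendsto_of_complete hcauchy
  -- divisibility at the limit
  have hlimdvd : ∀ j, ((2:Z2)^(e j)) ∣ c - cs j := by
    intro j
    have hnorm : ‖c - cs j‖ ≤ ((2:ℝ))^(-(e j : ℤ)) := by
      have htd : Tendsto (fun i => ‖cs i - cs j‖) atTop (𝓝 ‖c - cs j‖) :=
        ((hc.sub tendsto_const_nhds).norm)
      apply le_of_tendsto htd
      filter_upwards [eventually_ge_atTop j] with i hi
      exact hdistB i j hi
    have hmem : (c - cs j) ∈ Ideal.span {((2:ℕ):Z2)^(e j)} := by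
      apply (PadicInt.norm_le_pow_iff_mem_span_pow (c - cs j) (e j)).mp
      calc ‖c - cs j‖ ≤ ((2:ℝ))^(-(e j : ℤ)) := hnorm
        _ = (((2:ℕ)):ℝ)^(-(e j : ℤ)) := by norm_num
    rw [Ideal.mem_span_singleton] at hmem
    exact_mod_cast hmem
  -- the contradiction
  have hfar' : ∀ j, ∃ θ ∈ Set.Icc ((1:ℝ)/4) (3/4), iota (x (k j)) c = (θ : Circ) := by
    intro j
    obtain ⟨θ, hθ, hB⟩ := hfar j
    refine ⟨θ, hθ, ?_⟩
    rw [iota_apply (x (k j)) c (b := B j) (hlimdvd j), hB]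
  have htends : Tendsto (fun j => iota (x (k j)) c) atTop (𝓝 0) :=
    (hcoord c).comp hkmono.tendsto_atTop
  set KS : Set Circ := (fun θ : ℝ => (θ : Circ)) '' (Set.Icc ((1:ℝ)/4) (3/4)) with hKS
  have hKSclosed : IsClosed KS :=
    (isCompact_Icc.image (AddCircle.continuous_mk' 1)).isClosed
  have h0KS : (0:Circ) ∉ KS := by
    rintro ⟨θ, hθ, h0⟩
    exact circ_coe_ne_zero hθ.1 hθ.2 h0
  have hev : ∀ᶠ j in atTop, iota (x (k j)) c ∈ KSᶜ :=
    htends (hKSclosed.isOpen_compl.mem_nhds h0KS)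
  obtain ⟨j, hj⟩ := hev.exists
  obtain ⟨θ, hθ, heq⟩ := hfar' j
  exact hj ⟨θ, hθ, heq.symm⟩

-- the multiplicative version of A
abbrev H := Multiplicative A

open scoped Pointwise

instance : T2Space H := inferInstanceAs (T2Space A)
instance : Countable H := inferInstanceAs (Countable A)
instance : Infinite H := inferInstanceAs (Infinite A)

lemma subgroup_finite (N : Subgroup H) (hN : N ≠ ⊤) : (N : Set H).Finite := by
  by_cases hb : ∃ m : ℕ, ∀ g ∈ N, E (Multiplicative.toAdd g) ≤ m
  · obtain ⟨m, hm⟩ := hb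
    have hsub : (N : Set H) ⊆
        (fun g : H => (Multiplicative.toAdd g).1) ⁻¹' {z : Circ | ((2:ℤ)^m) • z = 0} :=
      fun g hg => E_kill (hm g hg)
    apply Set.Finite.subset (Set.Finite.preimage ?_ (ker_finite' m)) hsub
    intro g _ g' _ hgg
    exact Multiplicative.toAdd.injective (A_ext hgg)
  · push_neg at hb
    exfalso
    apply hN
    rw [Subgroup.eq_top_iff']
    intro z
    obtain ⟨g, hgN, hg⟩ := hb (E (Multiplicative.toAdd z))
    obtain ⟨kk, hkk⟩ := exists_zsmul (le_of_lt hg) (E_spec (Multiplicative.toAdd z))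
      (E_spec (Multiplicative.toAdd g)) (fun j hj => E_min (Multiplicative.toAdd g) hj)
    have hz : z = g ^ kk := by
      apply Multiplicative.toAdd.injective
      apply A_ext
      rw [toAdd_zpow]
      exact hkk
    rw [hz]
    exact N.zpow_mem hgN kk

lemma not_isOpen_one : ¬ IsOpen ({1} : Set H) := not_isOpen_zero

lemma no_seq_mul (z : ℕ → H) (hz : ∀ j, z j ≠ 1) (hlim : Tendsto z atTop (𝓝 1)) : False :=
  no_seq z hz hlim

lemma quotient_not_metrizable (N : Subgroup H) (hfin : (N : Set H).Finite)
    (hm : TopologicalSpace.MetrizableSpace (H ⧸ N)) : False := by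
  -- a small open set W around 1 meeting N only at 1
  have h1 : ((N : Set H) \ {1}).Finite := hfin.diff
  have hU0 : (((N : Set H) \ {1})ᶜ : Set H) ∈ 𝓝 (1:H) := by
    apply h1.isClosed.isOpen_compl.mem_nhds
    intro hc
    exact hc.2 rfl
  obtain ⟨V, hVo, hV1, hVmul⟩ := exists_open_nhds_one_mul_subset hU0
  set W : Set H := V ∩ V⁻¹ with hW
  have hWo : IsOpen W := hVo.inter hVo.inv
  have hW1 : (1:H) ∈ W := ⟨hV1, by rwa [Set.mem_inv, inv_one]⟩
  have hWsep : ∀ a ∈ W, ∀ b ∈ W, a⁻¹ * b ∈ N → a⁻¹ * b = 1 := by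
    intro a ha b hb hab
    by_contra hne
    have hmem : a⁻¹ * b ∈ V * V := ⟨a⁻¹, Set.mem_inv.mp ha.2, b, hb.1, rfl⟩
    exact (hVmul hmem) ⟨hab, hne⟩
  -- the neighborhood filter of 1 is countably generated
  have hnhds : 𝓝 (1:H) = Filter.comap (QuotientGroup.mk : H → H ⧸ N) (𝓝 (1 : H ⧸ N)) ⊓ 𝓟 W := by
    apply le_antisymm
    · refine le_inf ?_ (le_principal_iff.mpr (hWo.mem_nhds hW1))
      have hcont := QuotientGroup.continuous_mk (N := N)
      have := hcont.tendsto (1:H)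
      rw [tendsto_iff_comap] at this
      have h1q : ((1:H) : H ⧸ N) = (1 : H ⧸ N) := QuotientGroup.mk_one _
      rwa [h1q] at this
    · intro U hU
      obtain ⟨O, hOU, hOo, hO1⟩ := mem_nhds_iff.mp hU
      have hVq : (QuotientGroup.mk '' (O ∩ W) : Set (H ⧸ N)) ∈ 𝓝 (1 : H ⧸ N) := by
        apply (QuotientGroup.isOpenMap_coe _ (hOo.inter hWo)).mem_nhds
        exact ⟨1, ⟨hO1, hW1⟩, QuotientGroup.mk_one _⟩
      refine Filter.mem_of_superset
        (Filter.inter_mem_inf (Filter.preimage_mem_comap hVq) (Filter.mem_principal_self W)) ?_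
      rintro zz ⟨hz1, hz2⟩
      obtain ⟨u, ⟨huO, huW⟩, hu⟩ := hz1
      have huzz : u⁻¹ * zz ∈ N := QuotientGroup.eq.mp hu
      have := hWsep u huW zz hz2 huzz
      have hzu : u = zz := inv_mul_eq_one.mp this
      exact hOU (hzu ▸ huO)
  haveI := hm
  haveI : FirstCountableTopology (H ⧸ N) :=
    TopologicalSpace.PseudoMetrizableSpace.firstCountableTopology
  haveI : (𝓝 (1 : H ⧸ N)).IsCountablyGenerated := inferInstance
  haveI hcg : (𝓝 (1:H)).IsCountablyGenerated := by
    rw [hnhds]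
    infer_instance
  -- extract a nontrivial convergent sequence
  obtain ⟨u, hu⟩ := (𝓝 (1:H)).exists_antitone_basis
  have hpick : ∀ j : ℕ, ∃ zz : H, zz ∈ u j ∧ zz ≠ 1 := by
    intro j
    have huj : u j ∈ 𝓝 (1:H) := hu.1.mem_of_mem trivial
    obtain ⟨O, hOu, hOo, hO1⟩ := mem_nhds_iff.mp huj
    by_contra hcon
    push_neg at hcon
    apply not_isOpen_one
    have hOeq : O = {1} := by
      apply subset_antisymm
      · intro w hw
        exact hcon w (hOu hw)
      · intro w hw
        rw [Set.mem_singleton_iff] at hw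
        rw [hw]
        exact hO1
    rw [← hOeq]
    exact hOo
  choose zz hzz1 hzz2 using hpick
  exact no_seq_mul zz hzz2 (hu.tendsto hzz1)

-- the compactification
def Cl : AddSubgroup (Z2 → Circ) := (AddMonoidHom.range iota).topologicalClosure

lemma mem_Cl (x : A) : iota x ∈ Cl :=
  (AddSubgroup.le_topologicalClosure _) (AddMonoidHom.mem_range.mpr ⟨x, rfl⟩)

def iota₀ : A →+ ↥Cl := AddMonoidHom.codRestrict iota Cl mem_Cl

instance : CompactSpace ↥Cl := by
  have hcl : IsClosed (Cl : Set (Z2 → Circ)) := AddSubgroup.isClosed_topologicalClosure _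
  exact isCompact_iff_compactSpace.mp hcl.isCompact

lemma iota₀_continuous : Continuous iota₀ :=
  Continuous.subtype_mk iota_continuous _

lemma iota₀_embedding : Topology.IsEmbedding iota₀ := by
  apply Topology.IsEmbedding.of_comp iota₀_continuous continuous_subtype_val
  exact iota_embedding

lemma iota₀_denseRange : DenseRange iota₀ := by
  intro w
  rw [closure_subtype]
  have hr : Subtype.val '' Set.range iota₀ = Set.range iota := by
    ext z
    constructor
    · rintro ⟨z', ⟨x, rfl⟩, rfl⟩
      exact ⟨x, rfl⟩
    · rintro ⟨x, rfl⟩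
      exact ⟨iota₀ x, ⟨x, rfl⟩, rfl⟩
  rw [hr]
  have hre : ((AddMonoidHom.range iota : AddSubgroup (Z2 → Circ)) : Set (Z2 → Circ)) = Set.range iota := by
    ext z
    exact AddMonoidHom.mem_range
  rw [← hre]
  exact w.2

end

end Stmt17Aux

/-- There exists a countably infinite precompact Hausdorff abelian topological group `H`
(precompact: `H` embeds densely in a compact Hausdorff group) such that every quotient
group of `H` by a closed subgroup is either trivial or non-metrizable. -/
theorem stmt_17 :
    ∃ (H : Type) (_ : CommGroup H) (_ : TopologicalSpace H),
      IsTopologicalGroup H ∧ T2Space H ∧ Countable H ∧ Infinite H ∧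
      (∃ (C : Type) (_ : CommGroup C) (_ : TopologicalSpace C),
        IsTopologicalGroup C ∧ T2Space C ∧ CompactSpace C ∧
        ∃ ι : H →* C, Continuous ι ∧ Topology.IsEmbedding ι ∧ DenseRange ι) ∧
      ∀ N : Subgroup H, IsClosed (N : Set H) →
        Subsingleton (H ⧸ N) ∨ ¬ TopologicalSpace.MetrizableSpace (H ⧸ N) := by
  classical
  refine ⟨Stmt17Aux.H, inferInstance, inferInstance, inferInstance, inferInstance,
    inferInstance, inferInstance, ?_, ?_⟩
  · refine ⟨Multiplicative ↥Stmt17Aux.Cl, inferInstance, inferInstance, inferInstance,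
      inferInstanceAs (T2Space ↥Stmt17Aux.Cl), inferInstanceAs (CompactSpace ↥Stmt17Aux.Cl),
      AddMonoidHom.toMultiplicative Stmt17Aux.iota₀, ?_, ?_, ?_⟩
    · exact Stmt17Aux.iota₀_continuous
    · exact Stmt17Aux.iota₀_embedding
    · exact Stmt17Aux.iota₀_denseRange
  · intro N hNc
    rcases eq_or_ne N ⊤ with h | h
    · left
      subst h
      exact QuotientGroup.subsingleton_quotient_top
    · right
      intro hmet
      exact Stmt17Aux.quotient_not_metrizable N (Stmt17Aux.subgroup_finite N h) hmet
end

section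
/- Every non-separable compact Hausdorff abelian topological group G whose Pontryagin dual has infinite torsion-free rank admits the infinite torus T^ω as a quotient group. -/
open scoped Real

lemma exp_zsmul' (n : ℤ) (t : ℝ) : Circle.exp (n • t) = Circle.exp t ^ n := by
  have := map_zsmul Circle.expHom n t
  simpa [Circle.expHom, ← ofMul_zpow] using this

lemma circle_closed_subgroup (H : Subgroup Circle) (hc : IsClosed (H : Set Circle))
    (hne : H ≠ ⊤) : ∃ d : ℕ, 0 < d ∧ ∀ z ∈ H, z ^ d = 1 := by
  set S : AddSubgroup ℝ := AddSubgroup.comap Circle.expHom (Subgroup.toAddSubgroup H) with hS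
  have hmem : ∀ t : ℝ, t ∈ S ↔ Circle.exp t ∈ H := fun t => Iff.rfl
  have hSclosed : IsClosed (S : Set ℝ) := by
    have : (S : Set ℝ) = Circle.exp ⁻¹' (H : Set Circle) := rfl
    rw [this]; exact hc.preimage Circle.exp.continuous
  rcases S.dense_or_cyclic with hd | ⟨a, ha⟩
  · exfalso
    apply hne
    rw [Subgroup.eq_top_iff']
    intro z
    have : (S : Set ℝ) = Set.univ := hSclosed.closure_eq ▸ hd.closure_eq
    have harg : Complex.arg z ∈ S := by rw [← SetLike.mem_coe, this]; trivial
    rw [hmem] at harg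
    rwa [Circle.exp_arg] at harg
  · have h2pi : (2 * π) ∈ S := by
      rw [hmem, Circle.exp_two_pi]; exact one_mem H
    rw [ha, AddSubgroup.mem_closure_singleton] at h2pi
    obtain ⟨m, hm⟩ := h2pi
    have hm0 : m ≠ 0 := by
      rintro rfl
      simp only [zero_smul] at hm
      have := Real.pi_pos
      linarith
    refine ⟨m.natAbs, Int.natAbs_pos.2 hm0, fun z hz => ?_⟩
    have hz' : Complex.arg z ∈ S := by rw [hmem, Circle.exp_arg]; exact hz
    rw [ha, AddSubgroup.mem_closure_singleton] at hz'
    obtain ⟨k, hk⟩ := hz'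
    have hzm : z ^ m = 1 := by
      have : z = Circle.exp (k • a) := by rw [hk, Circle.exp_arg]
      rw [this, ← exp_zsmul', smul_smul, mul_comm, ← smul_smul, hm, exp_zsmul',
        Circle.exp_two_pi, one_zpow]
    rcases Int.natAbs_eq m with h | h
    · have : z ^ (m.natAbs : ℤ) = 1 := by rw [← h]; exact hzm
      rwa [zpow_natCast] at this
    · have : z ^ (m.natAbs : ℤ) = 1 := by
        rw [show (m.natAbs : ℤ) = -m by omega, zpow_neg, hzm, inv_one]
      rwa [zpow_natCast] at this

open scoped Real ComplexConjugate
open MeasureTheory AddCircle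

lemma addCircle_char (f : C(AddCircle (2*π), ℂ))
    (hmul : ∀ x y, f (x + y) = f x * f y) (hnorm : ∀ x, ‖f x‖ = 1) :
    ∃ n : ℤ, ∀ x, f x = fourier n x := by
  haveI : Fact (0 < 2*π) := ⟨by positivity⟩
  have hdef : ∀ n : ℤ, fourierCoeff (⇑f) n
      = ∫ t, fourier (-n) t • f t ∂(@haarAddCircle (2*π) _) := fun n => rfl
  -- step 1 : some Fourier coefficient is nonzero
  have h1 : ∃ n : ℤ, fourierCoeff (⇑f) n ≠ 0 := by
    by_contra h
    push_neg at h
    set F : Lp ℂ 2 (@haarAddCircle (2*π) _) :=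
      ContinuousMap.toLp (E := ℂ) 2 haarAddCircle ℂ f with hF
    have hcoe : ⇑F =ᵐ[(@haarAddCircle (2*π) _)] ⇑f :=
      ContinuousMap.coeFn_toLp (μ := (@haarAddCircle (2*π) _)) (𝕜 := ℂ) f
    have hco : ∀ n : ℤ, fourierCoeff (⇑F) n = 0 := by
      intro n
      rw [show fourierCoeff (⇑F) n = fourierCoeff (⇑f) n from ?_]
      · exact h n
      · exact integral_congr_ae (by filter_upwards [hcoe] with t ht; rw [ht])
    have hF0 : F = 0 := by
      have := hasSum_fourier_series_L2 (T := 2*π) F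
      simp only [hco, zero_smul] at this
      exact (hasSum_zero.unique this).symm
    have hae : ∀ᵐ t ∂(@haarAddCircle (2*π) _), f t = 0 := by
      filter_upwards [hcoe, Lp.coeFn_zero (E := ℂ) (p := 2) (μ := (@haarAddCircle (2*π) _))]
        with t ht h0
      rw [← ht, hF0, h0]
      rfl
    obtain ⟨t, ht⟩ := hae.exists
    have := hnorm t
    rw [ht] at this
    simp at this
  obtain ⟨n, hn⟩ := h1
  refine ⟨n, fun y => ?_⟩
  have key : fourier (-n) y * f y = 1 := by
    have hinv : ∫ t, fourier (-n) (t + y) • f (t + y) ∂(@haarAddCircle (2*π) _)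
        = fourierCoeff (⇑f) n := by
      rw [hdef]
      exact integral_add_right_eq_self (μ := (@haarAddCircle (2*π) _))
        (fun t => fourier (-n) t • f t) y
    have heq : ∀ t : AddCircle (2*π), fourier (-n) (t + y) • f (t + y)
        = (fourier (-n) y * f y) * (fourier (-n) t • f t) := by
      intro t
      have hf4 : (fourier (-n) (t + y) : ℂ) = fourier (-n) t * fourier (-n) y := by
        simp [fourier_apply, smul_add, AddCircle.toCircle_add]
      rw [hf4, hmul]
      simp only [smul_eq_mul]
      ring
    simp only [heq, integral_const_mul, hdef] at hinv
    exact mul_right_cancel₀ (by rw [hdef] at hn; exact hn) (by rw [hinv, one_mul])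
  have h0 : (fourier n y : ℂ) * fourier (-n) y = 1 := by
    rw [← fourier_add]
    simp [fourier_zero]
  calc f y = (fourier n y * fourier (-n) y) * f y := by rw [h0, one_mul]
    _ = fourier n y * (fourier (-n) y * f y) := by ring
    _ = fourier n y := by rw [key, mul_one]

lemma toCircle_surj : Function.Surjective (@AddCircle.toCircle (2*π)) := by
  intro z
  refine ⟨((Complex.arg z : ℝ) : AddCircle (2*π)), ?_⟩
  rw [toCircle_apply_mk, div_self (by positivity : (2*π : ℝ) ≠ 0), one_mul, Circle.exp_arg]

lemma toCircle_zpow (n : ℤ) (x : AddCircle (2*π)) :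
    AddCircle.toCircle (n • x) = AddCircle.toCircle x ^ n := by
  let tcHom : AddCircle (2*π) →+ Additive Circle :=
    { toFun := fun y => Additive.ofMul (AddCircle.toCircle y)
      map_zero' := by simp
      map_add' := fun a b => by simp [toCircle_add] }
  have := map_zsmul tcHom n x
  simpa [tcHom, ← ofMul_zpow] using this

lemma circle_char (ψ : Circle →* Circle) (hψ : Continuous ψ) :
    ∃ m : ℤ, ∀ z, ψ z = z ^ m := by
  haveI : Fact (0 < 2*π) := ⟨by positivity⟩
  let f : C(AddCircle (2*π), ℂ) :=
    ⟨fun x => (ψ (AddCircle.toCircle x) : ℂ),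
      continuous_subtype_val.comp (hψ.comp continuous_toCircle)⟩
  obtain ⟨n, hn⟩ := addCircle_char f
    (fun x y => by simp [f, toCircle_add])
    (fun x => by simp [f, Circle.norm_coe])
  refine ⟨n, fun z => ?_⟩
  obtain ⟨x, rfl⟩ := toCircle_surj z
  have := hn x
  rw [fourier_apply] at this
  have h2 : ψ (AddCircle.toCircle x) = AddCircle.toCircle (n • x) := Circle.coe_injective this
  rw [h2, toCircle_zpow]

lemma pi_char {ι : Type*} [Fintype ι] [DecidableEq ι] (ψ : (ι → Circle) →* Circle)
    (hψ : Continuous ψ) : ∃ m : ι → ℤ, ∀ z, ψ z = ∏ i, z i ^ m i := by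
  have h : ∀ i : ι, ∃ mi : ℤ, ∀ w : Circle,
      ψ (Pi.mulSingle i w) = w ^ mi := fun i =>
    circle_char (ψ.comp (MonoidHom.mulSingle (fun _ => Circle) i))
      (hψ.comp (@continuous_mulSingle ι (fun _ => Circle) _ _ _ i))
  choose m hm using h
  refine ⟨m, fun z => ?_⟩
  conv_lhs => rw [← Finset.univ_prod_mulSingle z]
  rw [map_prod]
  exact Finset.prod_congr rfl fun i _ => hm i (z i)
open Function

/-- evaluation homomorphism -/
noncomputable def evalHom {G : Type*} [CommGroup G] [TopologicalSpace G] [IsTopologicalGroup G] (g : G) :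
    PontryaginDual G →* Circle where
  toFun χ := χ g
  map_one' := rfl
  map_mul' _ _ := rfl

lemma finsurj {G : Type*} [CommGroup G] [TopologicalSpace G] [IsTopologicalGroup G]
    [CompactSpace G] [T2Space G]
    (x : ℕ → PontryaginDual G)
    (hord : ∀ i, ∀ m : ℤ, m ≠ 0 → x i ^ m ≠ 1)
    (hindep : ∀ (s : Finset ℕ) (c : ℕ → ℤ),
      (∏ i ∈ s, x i ^ c i) = 1 → ∀ i ∈ s, x i ^ c i = 1) :
    ∀ s : Finset ℕ, Function.Surjective (fun (g : G) (i : {i // i ∈ s}) => x i.1 g) := by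
  intro s
  induction s using Finset.induction_on with
  | empty => exact fun w => ⟨1, funext fun i => (Finset.notMem_empty i.1 i.2).elim⟩
  | @insert j s hj IH =>
    intro w
    set Φ : G →* ({i // i ∈ s} → Circle) :=
      { toFun := fun g i => x i.1 g
        map_one' := funext fun i => map_one (x i.1)
        map_mul' := fun a b => funext fun i => map_mul (x i.1) a b } with hΦ
    have hΦc : Continuous Φ := continuous_pi fun i => map_continuous (x i.1)
    have hΦs : Function.Surjective Φ := IH
    set N : Subgroup G := Φ.ker with hN
    have hNmem : ∀ g : G, g ∈ N → Φ g = 1 := fun g hg => hg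
    have hNmem' : ∀ g : G, Φ g = 1 → g ∈ N := fun g hg => hg
    have hNclosed : IsClosed (N : Set G) := by
      have : (N : Set G) = Φ ⁻¹' {1} := by
        ext g; simp [hN, MonoidHom.mem_ker]
      rw [this]; exact isClosed_singleton.preimage hΦc
    set H : Subgroup Circle := Subgroup.map (x j).toMonoidHom N with hH
    have hHclosed : IsClosed (H : Set Circle) := by
      have : (H : Set Circle) = (x j) '' (N : Set G) := rfl
      rw [this]
      exact ((hNclosed.isCompact).image (map_continuous (x j))).isClosed
    by_cases hHtop : H = ⊤
    · -- extend a preimage using H = ⊤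
      obtain ⟨g0, hg0⟩ := hΦs (fun i => w ⟨i.1, Finset.mem_insert_of_mem i.2⟩)
      have hmem : w ⟨j, Finset.mem_insert_self j s⟩ * (x j g0)⁻¹ ∈ H := by
        rw [hHtop]; trivial
      obtain ⟨n, hn, hxn⟩ := hmem
      have hxn' : x j n = w ⟨j, Finset.mem_insert_self j s⟩ * (x j g0)⁻¹ := hxn
      refine ⟨g0 * n, funext fun i => ?_⟩
      obtain ⟨i, hi⟩ := i
      rcases Finset.mem_insert.mp hi with rfl | h
      · show x i (g0 * n) = w ⟨i, hi⟩
        rw [map_mul, hxn', mul_comm, inv_mul_cancel_right]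
      · show x i (g0 * n) = w ⟨i, hi⟩
        have h1 : x i n = 1 := congrFun (hNmem n hn) ⟨i, h⟩
        have h2 : x i g0 = w ⟨i, hi⟩ := congrFun hg0 ⟨i, h⟩
        rw [map_mul, h1, mul_one, h2]
    · exfalso
      obtain ⟨d, hd, hdH⟩ := circle_closed_subgroup H hHclosed hHtop
      have hquot : Topology.IsQuotientMap Φ := (hΦc.isClosedMap).isQuotientMap hΦc hΦs
      set χ : G →* Circle :=
        { toFun := fun g => (x j g) ^ d
          map_one' := by simp
          map_mul' := fun a b => by simp [mul_pow] } with hχ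
      have hχapp : ∀ g : G, χ g = (x j g) ^ d := fun g => rfl
      have hχN : ∀ n ∈ N, χ n = 1 := fun n hn => hdH _ ⟨n, hn, rfl⟩
      have hconst : ∀ a b : G, Φ a = Φ b → χ a = χ b := by
        intro a b hab
        have hab' : a * b⁻¹ ∈ N := by
          apply hNmem'
          rw [map_mul, map_inv, hab, mul_inv_cancel]
        have h1 := hχN _ hab'
        rw [map_mul, map_inv] at h1
        rwa [mul_inv_eq_one] at h1
      set σ := Function.surjInv hΦs with hσ
      have hσΦ : ∀ z, Φ (σ z) = z := Function.rightInverse_surjInv hΦs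
      set ψ : ({i // i ∈ s} → Circle) →* Circle :=
        { toFun := fun z => χ (σ z)
          map_one' := by
            show χ (σ 1) = 1
            have : χ (σ 1) = χ 1 := hconst _ _ (by rw [hσΦ, map_one])
            rw [this, map_one]
          map_mul' := fun z z' => by
            show χ (σ (z * z')) = χ (σ z) * χ (σ z')
            have : χ (σ (z * z')) = χ (σ z * σ z') :=
              hconst _ _ (by rw [hσΦ, map_mul, hσΦ, hσΦ])
            rw [this, map_mul] } with hψ
      have hψΦ : ∀ g, ψ (Φ g) = χ g := fun g => hconst _ _ (hσΦ (Φ g))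
      have hψc : Continuous ψ := by
        rw [hquot.continuous_iff]
        have he : ⇑ψ ∘ ⇑Φ = fun g => (x j g) ^ d := funext fun g => hψΦ g
        rw [he]
        exact (map_continuous (x j)).pow d
      obtain ⟨m, hm⟩ := pi_char ψ hψc
      set c : ℕ → ℤ := fun k => if h : k ∈ s then -(m ⟨k, h⟩) else (d : ℤ) with hc
      have hcj : c j = (d : ℤ) := by simp [hc, hj]
      have hprod : (∏ i ∈ insert j s, x i ^ c i) = 1 := by
        apply DFunLike.ext
        intro g
        have hev : (∏ i ∈ insert j s, x i ^ c i) g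
            = ∏ i ∈ insert j s, (x i g) ^ c i := by
          have h1 : (∏ i ∈ insert j s, x i ^ c i) g
              = evalHom g (∏ i ∈ insert j s, x i ^ c i) := rfl
          rw [h1, map_prod]
          exact Finset.prod_congr rfl fun i _ => map_zpow (evalHom g) (x i) (c i)
        have hkey : (x j g) ^ d = ∏ i : {i // i ∈ s}, (x i.1 g) ^ (m i) :=
          calc (x j g) ^ d = χ g := rfl
            _ = ψ (Φ g) := (hψΦ g).symm
            _ = ∏ i : {i // i ∈ s}, (Φ g i) ^ (m i) := hm (Φ g)
            _ = ∏ i : {i // i ∈ s}, (x i.1 g) ^ (m i) := rfl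
        have hrest : ∏ i ∈ s, (x i g) ^ c i
            = ∏ i : {i // i ∈ s}, (x i.1 g) ^ (-(m i)) := by
          rw [← Finset.prod_coe_sort s (fun i => (x i g) ^ c i)]
          exact Finset.prod_congr rfl fun i _ => by rw [hc]; simp [i.2]
        rw [hev, Finset.prod_insert hj, hcj, zpow_natCast, hrest, hkey,
          ← Finset.prod_mul_distrib]
        have : ∀ i : {i // i ∈ s}, (x i.1 g) ^ (m i) * (x i.1 g) ^ (-(m i)) = 1 := by
          intro i
          rw [← zpow_add, add_neg_cancel, zpow_zero]
        rw [Finset.prod_congr rfl fun i _ => this i, Finset.prod_const_one]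
        rfl
      have hfin := hindep (insert j s) c hprod j (Finset.mem_insert_self j s)
      rw [hcj] at hfin
      exact hord j (d : ℤ) (by exact_mod_cast hd.ne') hfin


/-- Every non-separable compact Hausdorff abelian topological group `G` whose Pontryagin
dual has infinite torsion-free rank (there is an infinite independent family of elements
of infinite order in the dual) admits the infinite torus `𝕋^ω` as a quotient group. -/
theorem stmt_19 {G : Type*} [CommGroup G] [TopologicalSpace G] [IsTopologicalGroup G]
    [CompactSpace G] [T2Space G]
    (hns : ¬ TopologicalSpace.SeparableSpace G)
    (x : ℕ → PontryaginDual G)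
    (hord : ∀ i, ∀ m : ℤ, m ≠ 0 → x i ^ m ≠ 1)
    (hindep : ∀ (s : Finset ℕ) (c : ℕ → ℤ),
      (∏ i ∈ s, x i ^ c i) = 1 → ∀ i ∈ s, x i ^ c i = 1) :
    ∃ f : G →* (ℕ → Circle), Continuous f ∧ Function.Surjective f ∧ IsOpenMap f := by
  classical
  set f : G →* (ℕ → Circle) :=
    { toFun := fun g i => x i g
      map_one' := funext fun i => map_one (x i)
      map_mul' := fun a b => funext fun i => map_mul (x i) a b } with hf
  have hfc : Continuous f := continuous_pi fun i => map_continuous (x i)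
  have hfs : Function.Surjective f := by
    intro w
    set C : ℕ → Set G := fun n => {g | ∀ i < n, x i g = w i} with hC
    have hCclosed : ∀ n, IsClosed (C n) := by
      intro n
      have : C n = ⋂ i ∈ Finset.range n, {g : G | x i g = w i} := by
        ext g; simp [hC, Finset.mem_range]
      rw [this]
      exact isClosed_biInter fun i _ =>
        isClosed_eq (map_continuous (x i)) continuous_const
    have hCne : ∀ n, (C n).Nonempty := by
      intro n
      obtain ⟨g, hg⟩ := finsurj x hord hindep (Finset.range n)
        (fun i => w i.1)
      exact ⟨g, fun i hi => congrFun hg ⟨i, Finset.mem_range.2 hi⟩⟩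
    have hmono : ∀ n, C (n + 1) ⊆ C n := fun n g hg i hi => hg i (hi.trans (Nat.lt_succ_self n))
    obtain ⟨g, hg⟩ := IsCompact.nonempty_iInter_of_sequence_nonempty_isCompact_isClosed
      C hmono hCne ((hCclosed 0).isCompact) hCclosed
    refine ⟨g, funext fun i => ?_⟩
    exact (Set.mem_iInter.1 hg (i + 1)) i (Nat.lt_succ_self i)
  have hopen : IsOpenMap f := by
    set K := f.ker with hK
    set φ := QuotientGroup.kerLift f with hφ
    have hφc : Continuous φ := by
      rw [(QuotientGroup.isOpenQuotientMap_mk (N := K)).isQuotientMap.continuous_iff]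
      have : ⇑φ ∘ (QuotientGroup.mk : G → G ⧸ K) = ⇑f :=
        funext fun g => QuotientGroup.kerLift_mk f g
      rw [this]
      exact hfc
    have hφbij : Function.Bijective φ := by
      refine ⟨QuotientGroup.kerLift_injective f, fun y => ?_⟩
      obtain ⟨g, rfl⟩ := hfs y
      exact ⟨QuotientGroup.mk g, QuotientGroup.kerLift_mk f g⟩
    let e : (G ⧸ K) ≃ₜ (ℕ → Circle) :=
      Continuous.homeoOfEquivCompactToT2 (f := Equiv.ofBijective φ hφbij) hφc
    have hfe : ⇑f = ⇑e ∘ (QuotientGroup.mk : G → G ⧸ K) :=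
      funext fun g => (QuotientGroup.kerLift_mk f g).symm
    rw [hfe]
    exact e.isOpenMap.comp (QuotientGroup.isOpenQuotientMap_mk).isOpenMap
  exact ⟨f, hfc, hfs, hopen⟩
end
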